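/- arXiv:1904.03347 — 3 statements merged into one kernel-verified Lean document; each statement's English description precedes it below -/
import Mathlib

section
/- (Validity of LB3) Let C be an initial configuration of the BRP in which every stack holds at least k blocks, let 𝔅¹ be the set of blocks badly placed in C, and let 𝔅³ be the top k layers of C. Suppose (1) the block of minimum label does not belong to 𝔅³, and (2) every badly placed block of 𝔅³ has a label strictly greater than the minimum label remaining in stack s after deleting the topmost k−1 blocks of s, for every stack s. Then f(Fin B) ≥ |𝔅¹| + k. -/
/-- A configuration of the BRP: each stack holds a list of blocks, bottom to top. -/
abbrev Config (B S : ℕ) := Fin S → List (Fin B)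

/-- Every block occurs exactly once among the stacks. -/
def IsConfig {B S : ℕ} (C : Config B S) : Prop :=
  ∀ b : Fin B, (∑ s : Fin S, (C s).count b) = 1

/-- `a` lies strictly below `b` in stack `s` of `C`. -/
def StrictlyBelow {B S : ℕ} (C : Config B S) (s : Fin S) (a b : Fin B) : Prop :=
  ∃ i j : ℕ, i < j ∧ (C s)[i]? = some a ∧ (C s)[j]? = some b

/-- A block is badly placed if some smaller-labelled block lies below it in its stack. -/
def BadlyPlaced {B S : ℕ} (C : Config B S) (b : Fin B) : Prop :=
  ∃ s a, a < b ∧ StrictlyBelow C s a b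

/-- Moves: retrieve the top block of a stack, or relocate the top block of one
stack onto another stack. -/
inductive Move (S : ℕ) where
  | retrieve (s : Fin S)
  | relocate (src dst : Fin S)

def applyMove {B S : ℕ} (C : Config B S) : Move S → Config B S
  | .retrieve s => Function.update C s (C s).dropLast
  | .relocate src dst =>
    match (C src).getLast? with
    | some b =>
      let C' := Function.update C src (C src).dropLast
      Function.update C' dst (C' dst ++ [b])
    | none => C

def Enabled {B S : ℕ} (C : Config B S) : Move S → Prop
  | .retrieve s => ∃ b, (C s).getLast? = some b ∧ ∀ (s' : Fin S), ∀ b' ∈ C s', b ≤ b'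
  | .relocate src dst => src ≠ dst ∧ C src ≠ []

def play {B S : ℕ} (C : Config B S) : List (Move S) → Config B S
  | [] => C
  | m :: ms => play (applyMove C m) ms

def AllEnabled {B S : ℕ} (C : Config B S) : List (Move S) → Prop
  | [] => True
  | m :: ms => Enabled C m ∧ AllEnabled (applyMove C m) ms

/-- A feasible move sequence: every move is enabled and at the end all blocks
have been retrieved. -/
def Feasible {B S : ℕ} (C : Config B S) (ms : List (Move S)) : Prop :=
  AllEnabled C ms ∧ ∀ s, play C ms s = []

/-- `b` is the block moved by `m` (a relocation) performed in configuration `C`. -/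
def MovedBlock {B S : ℕ} (C : Config B S) (m : Move S) (b : Fin B) : Prop :=
  ∃ src dst, m = .relocate src dst ∧ src ≠ dst ∧ (C src).getLast? = some b

/-- The four types of relocation moves. -/
inductive MType where
  | BB | BG | GB | GG

/-- The relocation `m`, moving block `b` from configuration `C`, has the given type. -/
def MTypeOf {B S : ℕ} (C : Config B S) (m : Move S) (b : Fin B) : MType → Prop
  | .BB => BadlyPlaced C b ∧ BadlyPlaced (applyMove C m) b
  | .BG => BadlyPlaced C b ∧ ¬ BadlyPlaced (applyMove C m) b
  | .GB => ¬ BadlyPlaced C b ∧ BadlyPlaced (applyMove C m) b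
  | .GG => ¬ BadlyPlaced C b ∧ ¬ BadlyPlaced (applyMove C m) b

/-- `m` is a relocation of a block of `𝔅`. -/
def RelocIn {B S : ℕ} (𝔅 : Set (Fin B)) (C : Config B S) (m : Move S) : Prop :=
  ∃ b ∈ 𝔅, MovedBlock C m b

/-- `m` is a relocation of a block of `𝔅` of type `mt`. -/
def RelocTypeIn {B S : ℕ} (mt : MType) (𝔅 : Set (Fin B)) (C : Config B S) (m : Move S) : Prop :=
  ∃ b ∈ 𝔅, MovedBlock C m b ∧ MTypeOf C m b mt

/-- `m` is a non-BG relocation of a block of `𝔅`. -/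
def RelocNonBGIn {B S : ℕ} (𝔅 : Set (Fin B)) (C : Config B S) (m : Move S) : Prop :=
  ∃ b ∈ 𝔅, MovedBlock C m b ∧ ¬ MTypeOf C m b MType.BG

/-- Count the moves of a sequence satisfying `P` (evaluated in the configuration
in which each move is performed). -/
noncomputable def countMoves {B S : ℕ} (P : Config B S → Move S → Prop) :
    Config B S → List (Move S) → ℕ
  | _, [] => 0
  | C, m :: ms =>
    (@ite ℕ (P C m) (Classical.propDecidable _) 1 0) + countMoves P (applyMove C m) ms

/-- Minimum over feasible move sequences of the number of moves satisfying `P`. -/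
noncomputable def fMin {B S : ℕ} (C : Config B S) (P : Config B S → Move S → Prop) : ℕ :=
  sInf { n | ∃ ms, Feasible C ms ∧ countMoves P C ms = n }

/-- `f(𝔅)`: least number of relocations applied to blocks of `𝔅`. -/
noncomputable def fRel {B S : ℕ} (C : Config B S) (𝔅 : Set (Fin B)) : ℕ :=
  fMin C (RelocIn 𝔅)

/-- `f_mt(𝔅)`: least number of type-`mt` relocations applied to blocks of `𝔅`. -/
noncomputable def fTyp {B S : ℕ} (C : Config B S) (mt : MType) (𝔅 : Set (Fin B)) : ℕ :=
  fMin C (RelocTypeIn mt 𝔅)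

/-- `f_nonBG(𝔅)`: least number of non-BG relocations applied to blocks of `𝔅`. -/
noncomputable def fNonBG {B S : ℕ} (C : Config B S) (𝔅 : Set (Fin B)) : ℕ :=
  fMin C (RelocNonBGIn 𝔅)

/-- The top 1st layer: the topmost block of each stack. -/
def TopLayer {B S : ℕ} (C : Config B S) : Set (Fin B) :=
  {b | ∃ s, (C s).getLast? = some b}

/-- The top `k` layers: the topmost `k` blocks of every stack. -/
def TopK {B S : ℕ} (C : Config B S) (k : ℕ) : Set (Fin B) :=
  {b | ∃ s, b ∈ (C s).drop ((C s).length - k)}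

/-- The top `j`-th layer: the `j`-th block from the top of every stack. -/
def TopJth {B S : ℕ} (C : Config B S) (j : ℕ) : Set (Fin B) :=
  {b | ∃ s, (C s)[(C s).length - j]? = some b}

/-- A virtual layer: a set of blocks containing exactly one block from each stack. -/
def VirtualLayer {B S : ℕ} (C : Config B S) (V : Set (Fin B)) : Prop :=
  ∀ s : Fin S, ∃! b : Fin B, b ∈ V ∧ b ∈ C s

/-- `a` lies at or below the `V`-block of stack `s`. -/
def AtOrBelowLayer {B S : ℕ} (C : Config B S) (V : Set (Fin B)) (s : Fin S) (a : Fin B) : Prop :=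
  ∃ b j, b ∈ V ∧ (C s)[j]? = some b ∧ a ∈ (C s).take (j + 1)

/-- `V` is a virtual layer satisfying the conditions of Property 5:
(1) in some stack, a block strictly below the `V`-block of that stack has a smaller
label than every block of `V`; (2) every badly placed block of `V` has a label
strictly greater than the minimum label present in stack `s` after deleting all
blocks strictly above the `V`-block of `s`, for every stack `s`. -/
def P5 {B S : ℕ} (C : Config B S) (V : Set (Fin B)) : Prop :=
  VirtualLayer C V ∧
  (∃ s a b, b ∈ V ∧ StrictlyBelow C s a b ∧ ∀ c ∈ V, a < c) ∧
  (∀ b ∈ V, BadlyPlaced C b → ∀ s : Fin S, ∃ a, AtOrBelowLayer C V s a ∧ a < b)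

/-- A pair of virtual layers `V₁` (upper), `V₂` (lower) with shared well-placed
block `bstar` satisfying the conditions of Property 7. -/
def P7 {B S : ℕ} (C : Config B S) (V₁ V₂ : Set (Fin B)) (bstar : Fin B) : Prop :=
  V₁ ∩ V₂ = {bstar} ∧
  ¬ BadlyPlaced C bstar ∧
  (∀ s : Fin S, bstar ∉ C s →
    ∃ b₁ b₂, b₁ ∈ V₁ ∧ b₂ ∈ V₂ ∧ StrictlyBelow C s b₂ b₁) ∧
  P5 C V₁ ∧ P5 C V₂ ∧
  (∀ s : Fin S, ∃ a, AtOrBelowLayer C V₁ s a ∧ a ≤ bstar) ∧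
  (∃ s : Fin S, ∀ a, AtOrBelowLayer C V₁ s a → bstar ≤ a)

/-- Push blocks one by one onto the indicated stacks. -/
def pushAll {B S : ℕ} (C : Config B S) : List (Fin B × Fin S) → Config B S
  | [] => C
  | p :: rest => pushAll (Function.update C p.2 (C p.2 ++ [p.1])) rest

/-- The blocks lying strictly above position `i` of stack `s`, listed from the
top of the stack downward (the processing order of the experiment). -/
def aboveList {B S : ℕ} (C : Config B S) (s : Fin S) (i : ℕ) : List (Fin B) :=
  ((C s).drop (i + 1)).reverse

/-- The arrangement resulting from the experiment of Property 4: the blocks above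
position `i` of stack `s` are relocated exactly once, from the top downward, onto
the stacks listed in `ds`. -/
def expResult {B S : ℕ} (C : Config B S) (s : Fin S) (i : ℕ) (ds : List (Fin S)) :
    Config B S :=
  pushAll (Function.update C s ((C s).take (i + 1))) ((aboveList C s i).zip ds)

/-- The condition of Property 4 (target block at position `i` of stack `sStar`):
in every experiment, some relocated block ends badly placed. -/
def P4Cond {B S : ℕ} (C : Config B S) (sStar : Fin S) (i : ℕ) : Prop :=
  ∀ ds : List (Fin S), ds.length = (aboveList C sStar i).length →
    (∀ d ∈ ds, d ≠ sStar) →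
    ∃ b ∈ aboveList C sStar i, BadlyPlaced (expResult C sStar i ds) b

/-- The set `𝔅⁴`: the blocks above the target block together with, for each
nonempty stack other than the target's stack, its block of minimum label. -/
def B4Set {B S : ℕ} (C : Config B S) (sStar : Fin S) (i : ℕ) : Set (Fin B) :=
  {b | b ∈ aboveList C sStar i} ∪
  {b | ∃ s, s ≠ sStar ∧ b ∈ C s ∧ ∀ b' ∈ C s, b ≤ b'}

/-- The number of direct blockages: adjacent pairs in a stack whose upper block
has a strictly larger label. -/
def directBlockages {B S : ℕ} (C : Config B S) : ℕ :=
  ∑ s : Fin S, (((C s).zip (C s).tail).filter (fun p => decide (p.1 < p.2))).length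

/-- The number of relocations in a move sequence. -/
def relocCount {S : ℕ} (ms : List (Move S)) : ℕ :=
  (ms.filter (fun m => match m with | Move.relocate _ _ => true | Move.retrieve _ => false)).length

/-- The minimum number of relocations over all feasible move sequences. -/
noncomputable def fAll {B S : ℕ} (C : Config B S) : ℕ :=
  sInf { n | ∃ ms, Feasible C ms ∧ relocCount ms = n }

/-- `g(L)`: `L` plus the minimum number of direct blockages over all partial
plans with exactly `L` relocations. -/
noncomputable def gIter {B S : ℕ} (C : Config B S) (L : ℕ) : ℕ :=
  L + sInf { d | ∃ ms : List (Move S), AllEnabled C ms ∧ relocCount ms = L ∧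
      d = directBlockages (play C ms) }


/-! ### Auxiliary machinery for LB3 -/

section LB3Aux

variable {B S : ℕ}

open Classical in
/-- Number of badly placed blocks. -/
noncomputable def nBadly (D : Config B S) : ℕ :=
  (Finset.univ.filter fun b : Fin B => BadlyPlaced D b).card

/-- Total number of occurrences of a block in a configuration. -/
def TotCount (D : Config B S) (b : Fin B) : ℕ := ∑ s, (D s).count b

/-- Every block occurs at most once. -/
def ValidC (D : Config B S) : Prop := ∀ b, TotCount D b ≤ 1

/-- The move is a BG relocation. -/
def QBG (D : Config B S) (m : Move S) : Prop :=
  ∃ b, MovedBlock D m b ∧ BadlyPlaced D b ∧ ¬ BadlyPlaced (applyMove D m) b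

lemma prefix_getElem? {α : Type*} {l₁ l₂ : List α} (h : l₁ <+: l₂) {i : ℕ} {a : α}
    (hi : l₁[i]? = some a) : l₂[i]? = some a := by
  obtain ⟨tl, rfl⟩ := h
  have hlt : i < l₁.length := (List.getElem?_eq_some_iff.mp hi).1
  rw [List.getElem?_append, if_pos hlt]; exact hi

lemma mem_of_getElem?' {α : Type*} {l : List α} {i : ℕ} {a : α} (h : l[i]? = some a) : a ∈ l :=
  List.mem_iff_getElem?.mpr ⟨i, h⟩

lemma two_le_count {l : List (Fin B)} {i j : ℕ} {a : Fin B} (hij : i < j)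
    (hi : l[i]? = some a) (hj : l[j]? = some a) : 2 ≤ l.count a := by
  have h1 : a ∈ l.take (i+1) := mem_of_getElem?' (i := i)
    (by rw [List.getElem?_take, if_pos (Nat.lt_succ_self i)]; exact hi)
  have h2 : a ∈ l.drop (i+1) := mem_of_getElem?' (i := j - (i+1))
    (by rw [List.getElem?_drop, show i+1+(j-(i+1)) = j by omega]; exact hj)
  have hc : (l.take (i+1) ++ l.drop (i+1)).count a = (l.take (i+1)).count a + (l.drop (i+1)).count a :=
    List.count_append
  rw [List.take_append_drop] at hc
  have c1 : 0 < (l.take (i+1)).count a := List.count_pos_iff.mpr h1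
  have c2 : 0 < (l.drop (i+1)).count a := List.count_pos_iff.mpr h2
  omega

lemma count_le_tot (D : Config B S) (b : Fin B) (s : Fin S) : (D s).count b ≤ TotCount D b :=
  Finset.single_le_sum (f := fun s => (D s).count b) (fun _ _ => Nat.zero_le _) (Finset.mem_univ s)

lemma pos_unique {D : Config B S} (hV : ValidC D) {s s' : Fin S} {i j : ℕ} {b : Fin B}
    (h1 : (D s)[i]? = some b) (h2 : (D s')[j]? = some b) : s = s' ∧ i = j := by
  have hm1 : 0 < (D s).count b := List.count_pos_iff.mpr (mem_of_getElem?' h1)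
  have hm2 : 0 < (D s').count b := List.count_pos_iff.mpr (mem_of_getElem?' h2)
  have hVb := hV b
  have hss : s = s' := by
    by_contra hne
    have hle : (∑ x ∈ ({s, s'} : Finset (Fin S)), (D x).count b) ≤ ∑ x, (D x).count b :=
      Finset.sum_le_sum_of_subset (Finset.subset_univ _)
    rw [Finset.sum_pair hne] at hle
    have hVb' : (∑ x, (D x).count b) ≤ 1 := hV b
    omega
  subst hss
  refine ⟨rfl, ?_⟩
  have hcnt := count_le_tot D b s
  by_contra hne
  rcases Nat.lt_or_ge i j with h | h
  · have := two_le_count h h1 h2; omega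
  · have hlt : j < i := by omega
    have := two_le_count hlt h2 h1; omega

lemma bp_iff {D : Config B S} (hV : ValidC D) {s : Fin S} {p : ℕ} {b : Fin B}
    (hb : (D s)[p]? = some b) :
    BadlyPlaced D b ↔ ∃ a, a < b ∧ ∃ i < p, (D s)[i]? = some a := by
  constructor
  · rintro ⟨s', a, hab, i, j, hij, hia, hjb⟩
    obtain ⟨hss, hjp⟩ := pos_unique hV hjb hb
    subst hss
    exact ⟨a, hab, i, by omega, hia⟩
  · rintro ⟨a, hab, i, hip, hia⟩
    exact ⟨s, a, hab, i, p, hip, hia, hb⟩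

lemma applyMove_relocate_eq {D : Config B S} {src dst : Fin S} {b0 : Fin B}
    (hb0 : (D src).getLast? = some b0) :
    applyMove D (.relocate src dst) =
      Function.update (Function.update D src (D src).dropLast) dst
        ((Function.update D src (D src).dropLast) dst ++ [b0]) := by
  simp only [applyMove, hb0]

lemma applyMove_relocate_src {D : Config B S} {src dst : Fin S} {b0 : Fin B}
    (hne : src ≠ dst) (hb0 : (D src).getLast? = some b0) :
    applyMove D (.relocate src dst) src = (D src).dropLast := by
  rw [applyMove_relocate_eq hb0, Function.update_of_ne hne, Function.update_self]

lemma applyMove_relocate_dst {D : Config B S} {src dst : Fin S} {b0 : Fin B}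
    (hne : src ≠ dst) (hb0 : (D src).getLast? = some b0) :
    applyMove D (.relocate src dst) dst = D dst ++ [b0] := by
  rw [applyMove_relocate_eq hb0, Function.update_self, Function.update_of_ne (Ne.symm hne)]

lemma applyMove_relocate_other {D : Config B S} {src dst s : Fin S} {b0 : Fin B}
    (hb0 : (D src).getLast? = some b0) (hs : s ≠ src) (hd : s ≠ dst) :
    applyMove D (.relocate src dst) s = D s := by
  rw [applyMove_relocate_eq hb0, Function.update_of_ne hd, Function.update_of_ne hs]

lemma applyMove_retrieve_self (D : Config B S) (s : Fin S) :
    applyMove D (.retrieve s) s = (D s).dropLast := by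
  simp [applyMove]

lemma applyMove_retrieve_other (D : Config B S) {s s' : Fin S} (h : s' ≠ s) :
    applyMove D (.retrieve s) s' = D s' := by
  simp [applyMove, Function.update_of_ne h]

lemma sum_update_nat (F : Fin S → List (Fin B)) (x : Fin S) (l : List (Fin B))
    (g : List (Fin B) → ℕ) :
    (∑ s, g (Function.update F x l s)) + g (F x) = (∑ s, g (F s)) + g l := by
  classical
  have hfun : (fun s => g (Function.update F x l s)) = Function.update (fun s => g (F s)) x (g l) := by
    ext s
    by_cases h : s = x
    · subst h; simp
    · simp [Function.update_of_ne h]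
  rw [show (∑ s, g (Function.update F x l s)) = ∑ s, (fun s => g (Function.update F x l s)) s from rfl,
    hfun, Finset.sum_update_of_mem (Finset.mem_univ x)]
  rw [← Finset.add_sum_erase _ (fun s => g (F s)) (Finset.mem_univ x), Finset.erase_eq]
  ring

lemma exists_getLast? {α : Type*} {l : List α} (h : l ≠ []) : ∃ b, l.getLast? = some b := by
  cases hl : l.getLast? with
  | none => exact absurd (List.getLast?_eq_none_iff.mp hl) h
  | some b => exact ⟨b, rfl⟩

lemma totCount_relocate {D : Config B S} {src dst : Fin S} (hne : src ≠ dst)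
    (hnil : D src ≠ []) (b : Fin B) :
    TotCount (applyMove D (.relocate src dst)) b = TotCount D b := by
  obtain ⟨b0, hb0⟩ := exists_getLast? hnil
  have hlast : (D src).getLast hnil = b0 := by
    rw [List.getLast?_eq_getLast hnil] at hb0; exact Option.some.inj hb0
  have hdecomp : (D src).count b = (D src).dropLast.count b + [b0].count b := by
    conv_lhs => rw [← List.dropLast_concat_getLast hnil, hlast]
    rw [List.count_append]
  rw [applyMove_relocate_eq hb0]
  have h1 := sum_update_nat (Function.update D src (D src).dropLast) dst
      ((Function.update D src (D src).dropLast) dst ++ [b0]) (fun l => l.count b)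
  have h2 := sum_update_nat D src (D src).dropLast (fun l => l.count b)
  have hD1dst : (Function.update D src (D src).dropLast) dst = D dst :=
    Function.update_of_ne (Ne.symm hne) _ _
  have e1 : ((Function.update D src (D src).dropLast) dst).count b = (D dst).count b := by
    rw [hD1dst]
  have e2 : ((Function.update D src (D src).dropLast) dst ++ [b0]).count b
      = (D dst).count b + [b0].count b := by
    rw [hD1dst, List.count_append]
  unfold TotCount
  omega

lemma valid_applyMove {D : Config B S} {m : Move S} (hEn : Enabled D m) (hV : ValidC D) :
    ValidC (applyMove D m) := by
  cases m with
  | retrieve s =>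
    intro b
    have hVb : (∑ x, (D x).count b) ≤ 1 := hV b
    have h1 := sum_update_nat D s (D s).dropLast (fun l => l.count b)
    have h2 : ((D s).dropLast).count b ≤ (D s).count b :=
      (List.dropLast_sublist (D s)).count_le b
    have heq : TotCount (applyMove D (.retrieve s)) b
        = ∑ x, ((Function.update D s (D s).dropLast) x).count b := rfl
    rw [heq]
    omega
  | relocate src dst =>
    intro b
    rw [totCount_relocate hEn.1 hEn.2 b]
    exact hV b

lemma bp_survive_retrieve {D : Config B S} {s : Fin S} (hEn : Enabled D (.retrieve s))
    {b : Fin B} (hb : BadlyPlaced D b) : BadlyPlaced (applyMove D (.retrieve s)) b := by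
  obtain ⟨bt, hbt, hmin⟩ := hEn
  obtain ⟨s', a, hab, i, j, hij, hia, hjb⟩ := hb
  have hbbt : b ≠ bt := by
    rintro rfl
    exact absurd hab (not_lt.mpr (hmin s' a (mem_of_getElem?' hia)))
  refine ⟨s', a, hab, i, j, hij, ?_, ?_⟩
  · by_cases hs : s' = s
    · subst hs
      have hjlen : j < (D s').length := (List.getElem?_eq_some_iff.mp hjb).1
      have hilen : i < (D s').length := (List.getElem?_eq_some_iff.mp hia).1
      have hjne : j ≠ (D s').length - 1 := by
        intro hj
        rw [List.getLast?_eq_getElem? (l := D s'), ← hj, hjb] at hbt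
        exact hbbt (Option.some.inj hbt)
      rw [applyMove_retrieve_self, List.getElem?_dropLast, if_pos (by omega)]
      exact hia
    · rw [applyMove_retrieve_other D hs]; exact hia
  · by_cases hs : s' = s
    · subst hs
      have hjlen : j < (D s').length := (List.getElem?_eq_some_iff.mp hjb).1
      have hjne : j ≠ (D s').length - 1 := by
        intro hj
        rw [List.getLast?_eq_getElem? (l := D s'), ← hj, hjb] at hbt
        exact hbbt (Option.some.inj hbt)
      rw [applyMove_retrieve_self, List.getElem?_dropLast, if_pos (by omega)]
      exact hjb
    · rw [applyMove_retrieve_other D hs]; exact hjb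

lemma bp_survive_relocate {D : Config B S} {src dst : Fin S} {b0 : Fin B} (hne : src ≠ dst)
    (hb0 : (D src).getLast? = some b0) {b : Fin B} (hbb : b ≠ b0) (hb : BadlyPlaced D b) :
    BadlyPlaced (applyMove D (.relocate src dst)) b := by
  obtain ⟨s', a, hab, i, j, hij, hia, hjb⟩ := hb
  have hjlen : j < (D s').length := (List.getElem?_eq_some_iff.mp hjb).1
  have hjne : s' = src → j ≠ (D s').length - 1 := by
    rintro rfl hj
    rw [List.getLast?_eq_getElem? (l := D s'), ← hj, hjb] at hb0
    exact hbb (Option.some.inj hb0)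
  refine ⟨s', a, hab, i, j, hij, ?_, ?_⟩
  · by_cases hs : s' = src
    · subst hs
      have := hjne rfl
      rw [applyMove_relocate_src hne hb0, List.getElem?_dropLast, if_pos (by omega)]
      exact hia
    · by_cases hd : s' = dst
      · subst hd
        rw [applyMove_relocate_dst hne hb0, List.getElem?_append, if_pos (by omega)]
        exact hia
      · rw [applyMove_relocate_other hb0 hs hd]; exact hia
  · by_cases hs : s' = src
    · subst hs
      have := hjne rfl
      rw [applyMove_relocate_src hne hb0, List.getElem?_dropLast, if_pos (by omega)]
      exact hjb
    · by_cases hd : s' = dst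
      · subst hd
        rw [applyMove_relocate_dst hne hb0, List.getElem?_append, if_pos (by omega)]
        exact hjb
      · rw [applyMove_relocate_other hb0 hs hd]; exact hjb

open Classical in
lemma nBadly_step {D : Config B S} {m : Move S} (hV : ValidC D) (hEn : Enabled D m) :
    nBadly D ≤ (if QBG D m then 1 else 0) + nBadly (applyMove D m) := by
  cases m with
  | retrieve s =>
    have hsub : (Finset.univ.filter fun b : Fin B => BadlyPlaced D b) ⊆
        Finset.univ.filter fun b => BadlyPlaced (applyMove D (.retrieve s)) b := by
      intro b hb
      simp only [Finset.mem_filter, Finset.mem_univ, true_and] at hb ⊢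
      exact bp_survive_retrieve hEn hb
    have hcard := Finset.card_le_card hsub
    unfold nBadly
    omega
  | relocate src dst =>
    obtain ⟨hne, hnil⟩ := hEn
    obtain ⟨b0, hb0⟩ := exists_getLast? hnil
    by_cases hQ : QBG D (.relocate src dst)
    · rw [if_pos hQ]
      have hsub : (Finset.univ.filter fun b : Fin B => BadlyPlaced D b) ⊆
          insert b0 (Finset.univ.filter fun b => BadlyPlaced (applyMove D (.relocate src dst)) b) := by
        intro b hb
        simp only [Finset.mem_filter, Finset.mem_univ, true_and] at hb
        by_cases hbb : b = b0
        · exact hbb ▸ Finset.mem_insert_self _ _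
        · refine Finset.mem_insert_of_mem ?_
          simp only [Finset.mem_filter, Finset.mem_univ, true_and]
          exact bp_survive_relocate hne hb0 hbb hb
      have hcard := Finset.card_le_card hsub
      have hins := Finset.card_insert_le b0
        (Finset.univ.filter fun b => BadlyPlaced (applyMove D (.relocate src dst)) b)
      unfold nBadly
      omega
    · rw [if_neg hQ]
      have hsub : (Finset.univ.filter fun b : Fin B => BadlyPlaced D b) ⊆
          (Finset.univ.filter fun b => BadlyPlaced (applyMove D (.relocate src dst)) b) := by
        intro b hb
        simp only [Finset.mem_filter, Finset.mem_univ, true_and] at hb ⊢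
        by_cases hbb : b = b0
        · subst hbb
          by_contra hno
          exact hQ ⟨b, ⟨src, dst, rfl, hne, hb0⟩, hb, hno⟩
        · exact bp_survive_relocate hne hb0 hbb hb
      have hcard := Finset.card_le_card hsub
      unfold nBadly
      omega

open Classical in
lemma countMoves_eq_sum (P : Config B S → Move S → Prop) :
    ∀ (ms : List (Move S)) (C : Config B S),
      countMoves P C ms = ∑ i ∈ Finset.range ms.length,
        (if (∃ h : i < ms.length, P (play C (ms.take i)) (ms.get ⟨i, h⟩)) then 1 else 0) := by
  intro ms
  induction ms with
  | nil => intro C; simp [countMoves]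
  | cons m ms ih =>
    intro C
    have hcons : countMoves P C (m :: ms)
        = (@ite ℕ (P C m) (Classical.propDecidable _) 1 0) + countMoves P (applyMove C m) ms := rfl
    rw [hcons, ih]
    simp only [List.length_cons]
    rw [Finset.sum_range_succ']
    have h0 : (if (∃ h : (0:ℕ) < ms.length + 1, P (play C ((m :: ms).take 0)) ((m :: ms).get ⟨0, h⟩)) then 1 else 0)
        = (@ite ℕ (P C m) (Classical.propDecidable _) 1 0) := by
      refine if_congr ?_ rfl rfl
      constructor
      · rintro ⟨h, hp⟩; exact hp
      · intro hp; exact ⟨Nat.succ_pos _, hp⟩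
    have hterm : ∀ i ∈ Finset.range ms.length,
        (if (∃ h : i < ms.length, P (play (applyMove C m) (ms.take i)) (ms.get ⟨i, h⟩)) then 1 else 0)
        = (if (∃ h : i+1 < ms.length+1, P (play C ((m :: ms).take (i+1))) ((m :: ms).get ⟨i+1, h⟩)) then 1 else 0) := by
      intro i _
      refine if_congr ?_ rfl rfl
      constructor
      · rintro ⟨h, hp⟩; exact ⟨by omega, hp⟩
      · rintro ⟨h, hp⟩; exact ⟨by omega, hp⟩
    rw [h0, Finset.sum_congr rfl hterm]
    omega

lemma countMoves_mono {P Q : Config B S → Move S → Prop} (h : ∀ D m, P D m → Q D m) :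
    ∀ (ms : List (Move S)) (C : Config B S), countMoves P C ms ≤ countMoves Q C ms := by
  intro ms
  induction ms with
  | nil => intro C; exact le_refl _
  | cons m ms ih =>
    intro C
    have hP : countMoves P C (m :: ms)
        = (@ite ℕ (P C m) (Classical.propDecidable _) 1 0) + countMoves P (applyMove C m) ms := rfl
    have hQ : countMoves Q C (m :: ms)
        = (@ite ℕ (Q C m) (Classical.propDecidable _) 1 0) + countMoves Q (applyMove C m) ms := rfl
    rw [hP, hQ]
    have h2 := ih (applyMove C m)
    by_cases hp : P C m
    · rw [if_pos hp, if_pos (h _ _ hp)]; omega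
    · rw [if_neg hp]
      split <;> omega

lemma play_take_succ : ∀ (ms : List (Move S)) (C : Config B S) (i : ℕ) (h : i < ms.length),
    play C (ms.take (i+1)) = applyMove (play C (ms.take i)) (ms.get ⟨i, h⟩) := by
  intro ms
  induction ms with
  | nil => intro C i h; simp at h
  | cons m ms ih =>
    intro C i h
    cases i with
    | zero => rfl
    | succ i => exact ih (applyMove C m) i (by simpa using h)

lemma allEnabled_get : ∀ (ms : List (Move S)) (C : Config B S), AllEnabled C ms →
    ∀ (i : ℕ) (h : i < ms.length), Enabled (play C (ms.take i)) (ms.get ⟨i, h⟩) := by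
  intro ms
  induction ms with
  | nil => intro C _ i h; simp at h
  | cons m ms ih =>
    rintro C ⟨hE, hAE⟩ i h
    cases i with
    | zero => exact hE
    | succ i => exact ih (applyMove C m) hAE i (by simpa using h)

open Classical in
lemma nBadly_le_countQBG : ∀ (ms : List (Move S)) (D : Config B S), ValidC D →
    AllEnabled D ms → (∀ s, play D ms s = []) → nBadly D ≤ countMoves QBG D ms := by
  intro ms
  induction ms with
  | nil =>
    intro D _ _ hfin
    have hz : nBadly D = 0 := by
      unfold nBadly
      rw [Finset.card_eq_zero, Finset.filter_eq_empty_iff]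
      rintro b - ⟨s, a, hab, i, j, hij, hia, hjb⟩
      have := hfin s
      rw [show play D [] = D from rfl] at this
      rw [this] at hjb
      simp at hjb
    omega
  | cons m ms ih =>
    rintro D hV ⟨hE, hAE⟩ hfin
    have hstep := nBadly_step hV hE
    have hrest := ih (applyMove D m) (valid_applyMove hE hV) hAE hfin
    have hcons : countMoves QBG D (m :: ms)
        = (@ite ℕ (QBG D m) (Classical.propDecidable _) 1 0) + countMoves QBG (applyMove D m) ms := rfl
    rw [hcons]
    omega

/-- `b` is at position `p` of stack `s` and is the minimum present block. -/
def MinAt (D : Config B S) (s : Fin S) (p : ℕ) (b : Fin B) : Prop :=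
  (D s)[p]? = some b ∧ ∀ s' : Fin S, ∀ b' ∈ D s', b ≤ b'

lemma exists_ne_fin (hS : 2 ≤ S) (s : Fin S) : ∃ d : Fin S, d ≠ s := by
  rcases Nat.lt_or_ge s.val 1 with h | h
  · refine ⟨⟨1, by omega⟩, ?_⟩
    intro he
    have := congrArg Fin.val he
    simp at this
    omega
  · refine ⟨⟨0, by omega⟩, ?_⟩
    intro he
    have := congrArg Fin.val he
    simp at this
    omega

open Classical in
lemma exists_feasible (hS : 2 ≤ S) :
    ∀ N : ℕ, ∀ D : Config B S, ValidC D → (∑ s, (D s).length) ≤ N → ∃ ms, Feasible D ms := by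
  intro N
  induction N with
  | zero =>
    intro D _ hlen
    refine ⟨[], trivial, fun s => ?_⟩
    have h1 : (D s).length ≤ ∑ s', (D s').length :=
      Finset.single_le_sum (f := fun s' => (D s').length) (fun _ _ => Nat.zero_le _)
        (Finset.mem_univ s)
    have : (D s).length = 0 := by omega
    exact List.length_eq_zero_iff.mp this
  | succ N ihN =>
    suffices h : ∀ A : ℕ, ∀ D : Config B S, ValidC D → (∑ s, (D s).length) ≤ N + 1 →
        (∀ s p b, MinAt D s p b → (D s).length - 1 - p ≤ A) → ∃ ms, Feasible D ms by
      intro D hV hlen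
      refine h (N + 1) D hV hlen ?_
      intro s p b _
      have h1 : (D s).length ≤ ∑ s', (D s').length :=
        Finset.single_le_sum (f := fun s' => (D s').length) (fun _ _ => Nat.zero_le _)
          (Finset.mem_univ s)
      omega
    intro A
    induction A using Nat.strong_induction_on with
    | _ A ihA =>
      intro D hV hlen hA
      by_cases hemp : ∀ s, D s = []
      · exact ⟨[], trivial, fun s => hemp s⟩
      push_neg at hemp
      obtain ⟨s0, hs0⟩ := hemp
      have hPne : ((Finset.univ : Finset (Fin B)).filter fun b => ∃ s, b ∈ D s).Nonempty := by
        obtain ⟨b, hb⟩ := List.exists_mem_of_ne_nil _ hs0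
        exact ⟨b, by simp only [Finset.mem_filter, Finset.mem_univ, true_and]; exact ⟨s0, hb⟩⟩
      set b := (((Finset.univ : Finset (Fin B)).filter fun b => ∃ s, b ∈ D s)).min' hPne with hbdef
      have hbP : b ∈ ((Finset.univ : Finset (Fin B)).filter fun b => ∃ s, b ∈ D s) :=
        Finset.min'_mem _ _
      obtain ⟨sb, hsb⟩ : ∃ s, b ∈ D s := by
        simpa only [Finset.mem_filter, Finset.mem_univ, true_and] using hbP
      have hminle : ∀ s' : Fin S, ∀ b' ∈ D s', b ≤ b' := by
        intro s' b' hb'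
        refine Finset.min'_le _ _ ?_
        simp only [Finset.mem_filter, Finset.mem_univ, true_and]
        exact ⟨s', hb'⟩
      obtain ⟨p, hp⟩ := List.getElem?_of_mem hsb
      have hplen : p < (D sb).length := (List.getElem?_eq_some_iff.mp hp).1
      have hMin : MinAt D sb p b := ⟨hp, hminle⟩
      by_cases htop : (D sb).length ≤ p + 1
      · -- retrieve the minimum
        have hlast : (D sb).getLast? = some b := by
          rw [List.getLast?_eq_getElem? (l := D sb), show (D sb).length - 1 = p by omega]
          exact hp
        have hEn : Enabled D (.retrieve sb) := ⟨b, hlast, hminle⟩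
        have hV' := valid_applyMove hEn hV
        have hlen' : (∑ s, ((applyMove D (.retrieve sb)) s).length) ≤ N := by
          have h1 := sum_update_nat D sb (D sb).dropLast (fun l => l.length)
          have h2 : (D sb).dropLast.length = (D sb).length - 1 := List.length_dropLast
          have heq : (∑ s, ((applyMove D (.retrieve sb)) s).length)
              = ∑ s, ((Function.update D sb (D sb).dropLast) s).length := rfl
          rw [heq]
          omega
        obtain ⟨ms, hms1, hms2⟩ := ihN (applyMove D (.retrieve sb)) hV' hlen'
        exact ⟨.retrieve sb :: ms, ⟨hEn, hms1⟩, hms2⟩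
      · -- relocate the top of the minimum's stack
        push_neg at htop
        have hAge1 : 1 ≤ A := by
          have := hA sb p b hMin
          omega
        obtain ⟨d, hd⟩ := exists_ne_fin hS sb
        have hnil : D sb ≠ [] := by
          intro h
          rw [h] at hplen
          simp at hplen
        have hEn : Enabled D (.relocate sb d) := ⟨Ne.symm hd, hnil⟩
        obtain ⟨bt, hbt⟩ := exists_getLast? hnil
        have hV' := valid_applyMove hEn hV
        have hsrc' : applyMove D (.relocate sb d) sb = (D sb).dropLast :=
          applyMove_relocate_src (Ne.symm hd) hbt
        have hdst' : applyMove D (.relocate sb d) d = D d ++ [bt] :=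
          applyMove_relocate_dst (Ne.symm hd) hbt
        have hlen' : (∑ s, ((applyMove D (.relocate sb d)) s).length) ≤ N + 1 := by
          have h1 := sum_update_nat (Function.update D sb (D sb).dropLast) d
              ((Function.update D sb (D sb).dropLast) d ++ [bt]) (fun l => l.length)
          have h2 := sum_update_nat D sb (D sb).dropLast (fun l => l.length)
          have e0 : (Function.update D sb (D sb).dropLast) d = D d :=
            Function.update_of_ne hd _ _
          have e1 : ((Function.update D sb (D sb).dropLast) d).length = (D d).length := by
            rw [e0]
          have e2 : ((Function.update D sb (D sb).dropLast) d ++ [bt]).length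
              = (D d).length + 1 := by
            rw [e0, List.length_append, List.length_singleton]
          have e3 : (D sb).dropLast.length = (D sb).length - 1 := List.length_dropLast
          have heq : (∑ s, ((applyMove D (.relocate sb d)) s).length)
              = ∑ s, ((Function.update (Function.update D sb (D sb).dropLast) d
                  ((Function.update D sb (D sb).dropLast) d ++ [bt])) s).length := by
            rw [applyMove_relocate_eq hbt]
          rw [heq]
          omega
        have hbnew : (applyMove D (.relocate sb d) sb)[p]? = some b := by
          rw [hsrc', List.getElem?_dropLast, if_pos (by omega)]
          exact hp
        have hbtmem : bt ∈ D sb := by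
          refine mem_of_getElem?' (i := (D sb).length - 1) ?_
          rw [← List.getLast?_eq_getElem? (l := D sb)]
          exact hbt
        have hforall : ∀ s' p' b', MinAt (applyMove D (.relocate sb d)) s' p' b' →
            (applyMove D (.relocate sb d) s').length - 1 - p' ≤ A - 1 := by
          rintro s' p' b' ⟨hp', hmin'⟩
          have hsubmem : ∀ s'' b'', b'' ∈ applyMove D (.relocate sb d) s'' → ∃ s3, b'' ∈ D s3 := by
            intro s'' b'' hmem
            by_cases h1 : s'' = sb
            · rw [h1, hsrc'] at hmem
              exact ⟨sb, (List.dropLast_sublist _).subset hmem⟩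
            · by_cases h2 : s'' = d
              · rw [h2, hdst'] at hmem
                rcases List.mem_append.mp hmem with h | h
                · exact ⟨d, h⟩
                · simp only [List.mem_singleton] at h
                  subst h
                  exact ⟨sb, hbtmem⟩
              · rw [applyMove_relocate_other hbt h1 h2] at hmem
                exact ⟨s'', hmem⟩
          have hb'b : b' = b := by
            have h1 : b ≤ b' := by
              obtain ⟨s3, h3⟩ := hsubmem s' b' (mem_of_getElem?' hp')
              exact hminle s3 b' h3
            have h2 : b' ≤ b := hmin' sb b (mem_of_getElem?' hbnew)
            exact le_antisymm h2 h1
          rw [hb'b] at hp' hmin'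
          obtain ⟨hss, hpp⟩ := pos_unique hV' hp' hbnew
          rw [hss, hpp, hsrc', List.length_dropLast]
          have := hA sb p b hMin
          omega
        obtain ⟨ms, hms1, hms2⟩ := ihA (A - 1) (by omega) (applyMove D (.relocate sb d)) hV' hlen' hforall
        exact ⟨.relocate sb d :: ms, ⟨hEn, hms1⟩, hms2⟩

lemma prefix_dropLast_eq {α : Type*} {P l : List α} (h1 : P <+: l) (h2 : ¬ P <+: l.dropLast) :
    l = P := by
  rcases Nat.lt_or_ge P.length l.length with hlt | hge
  · exfalso
    apply h2
    rw [List.prefix_iff_eq_take] at h1 ⊢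
    rw [List.dropLast_eq_take, List.take_take, min_eq_left (by omega)]
    exact h1
  · exact (h1.eq_of_length (le_antisymm h1.length_le hge)).symm

/-- The configuration after the first `i` moves. -/
def StateAt (C : Config B S) (ms : List (Move S)) (i : ℕ) : Config B S := play C (ms.take i)

lemma stateAt_succ (C : Config B S) (ms : List (Move S)) {i : ℕ} (h : i < ms.length) :
    StateAt C ms (i+1) = applyMove (StateAt C ms i) (ms.get ⟨i, h⟩) :=
  play_take_succ ms C i h

lemma stateAt_enabled {C : Config B S} {ms : List (Move S)} (hAE : AllEnabled C ms) {i : ℕ}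
    (h : i < ms.length) : Enabled (StateAt C ms i) (ms.get ⟨i, h⟩) :=
  allEnabled_get ms C hAE i h

lemma stateAt_length_le (C : Config B S) (ms : List (Move S)) {i : ℕ} (h : ms.length ≤ i) :
    StateAt C ms i = play C ms := by
  rw [StateAt, List.take_of_length_le h]

end LB3Aux

/-- validity of LB3: under the conditions of Property 3 for the top
`k` layers, `f(Fin B) ≥ |𝔅¹| + k`, where `𝔅¹` is the set of badly placed blocks. -/
theorem brp_LB3 {B S : ℕ} (hS : 2 ≤ S) (hB : 1 ≤ B)
    (C : Config B S) (hC : IsConfig C)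
    (k : ℕ) (hk : ∀ s, k ≤ (C s).length)
    (t : Fin B) (ht : ∀ b, t ≤ b) (htout : t ∉ TopK C k)
    (hcond : ∀ b ∈ TopK C k, BadlyPlaced C b →
      ∀ s : Fin S, ∃ a ∈ (C s).take ((C s).length - (k - 1)), a < b) :
    {b | BadlyPlaced C b}.ncard + k ≤ fRel C Set.univ := by
  classical
  have hV : ValidC C := fun b => le_of_eq (hC b)
  have hncard : {b | BadlyPlaced C b}.ncard = nBadly C := by
    have hset : {b | BadlyPlaced C b}
        = ↑(Finset.univ.filter fun b : Fin B => BadlyPlaced C b) := by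
      ext b; simp
    rw [hset, Set.ncard_coe_finset]
    rfl
  rw [hncard, fRel, fMin]
  obtain ⟨ms0, hms0⟩ := exists_feasible hS (∑ s, (C s).length) C hV le_rfl
  refine le_csInf ⟨countMoves (RelocIn Set.univ) C ms0, ms0, hms0, rfl⟩ ?_
  rintro n ⟨ms, ⟨hAE, hfin⟩, rfl⟩
  have hclaim1 : nBadly C ≤ countMoves QBG C ms := nBadly_le_countQBG ms C hV hAE hfin
  rcases Nat.eq_zero_or_pos k with hk0 | hkpos
  · subst hk0
    have hmono := countMoves_mono (P := QBG) (Q := RelocIn Set.univ)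
      (fun D m hm => by obtain ⟨b, hmb, -, -⟩ := hm; exact ⟨b, Set.mem_univ b, hmb⟩) ms C
    omega
  -- main case: k ≥ 1
  have hS0 : 0 < S := by omega
  have hDeep0 : ∀ s : Fin S, (C s).take ((C s).length - (k-1)) <+: StateAt C ms 0 s :=
    fun s => List.take_prefix _ _
  have hDeepn : ¬ ∀ s : Fin S,
      (C s).take ((C s).length - (k-1)) <+: StateAt C ms ms.length s := by
    intro hD
    have h1 := hD ⟨0, hS0⟩
    rw [stateAt_length_le C ms le_rfl, hfin ⟨0, hS0⟩] at h1
    have h2 := List.prefix_nil.mp h1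
    have h3 := congrArg List.length h2
    rw [List.length_take, List.length_nil] at h3
    have := hk ⟨0, hS0⟩
    omega
  have hex : ∃ i, ¬ ∀ s : Fin S, (C s).take ((C s).length - (k-1)) <+: StateAt C ms i s :=
    ⟨ms.length, hDeepn⟩
  have hτspec := Nat.find_spec hex
  have hτmin : ∀ i, i < Nat.find hex →
      ∀ s : Fin S, (C s).take ((C s).length - (k-1)) <+: StateAt C ms i s :=
    fun i hi => not_not.mp (Nat.find_min hex hi)
  have hτn : Nat.find hex ≤ ms.length := Nat.find_min' hex hDeepn
  have hτpos : 0 < Nat.find hex := by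
    by_contra h
    have h0 : Nat.find hex = 0 := by omega
    rw [h0] at hτspec
    exact hτspec hDeep0
  -- locate t
  obtain ⟨sstar, istar, hist⟩ : ∃ s i, (C s)[i]? = some t := by
    refine Classical.byContradiction fun hno => ?_
    push_neg at hno
    have hmem : ∀ s, t ∉ C s := by
      intro s hmem
      obtain ⟨i, hi⟩ := List.getElem?_of_mem hmem
      exact hno s i hi
    have h1 := hC t
    rw [Finset.sum_congr rfl (fun s _ => List.count_eq_zero.mpr (hmem s))] at h1
    simp at h1
  have hslen : istar < (C sstar).length := (List.getElem?_eq_some_iff.mp hist).1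
  have histlt : istar + k < (C sstar).length := by
    by_contra hge
    push_neg at hge
    apply htout
    refine ⟨sstar, mem_of_getElem?' (i := istar - ((C sstar).length - k)) ?_⟩
    rw [List.getElem?_drop,
      show (C sstar).length - k + (istar - ((C sstar).length - k)) = istar by omega]
    exact hist
  have ht_at : ∀ i, i < Nat.find hex → (StateAt C ms i sstar)[istar]? = some t := by
    intro i hi
    refine prefix_getElem? (hτmin i hi sstar) ?_
    rw [List.getElem?_take, if_pos (by omega)]
    exact hist
  -- all moves before τ are relocations, and counts are preserved
  have hreloc : ∀ i, i < Nat.find hex → (∀ b, TotCount (StateAt C ms i) b = 1) ∧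
      (∃ (h : i < ms.length), ∃ src dst, src ≠ dst ∧ ms.get ⟨i, h⟩ = .relocate src dst ∧
        StateAt C ms i src ≠ []) := by
    intro i
    induction i using Nat.strong_induction_on with
    | _ i ih =>
      intro hiτ
      have hin : i < ms.length := by omega
      have hTC : ∀ b, TotCount (StateAt C ms i) b = 1 := by
        cases i with
        | zero => exact fun b => hC b
        | succ j =>
          obtain ⟨hTCj, hjn, src, dst, hne, hrel, hnil⟩ := ih j (by omega) (by omega)
          intro b
          rw [stateAt_succ C ms hjn, hrel, totCount_relocate hne hnil b]
          exact hTCj b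
      refine ⟨hTC, hin, ?_⟩
      have hVi : ValidC (StateAt C ms i) := fun b => (hTC b).le
      have hEni := stateAt_enabled hAE hin
      cases hm : ms.get ⟨i, hin⟩ with
      | retrieve st =>
        exfalso
        rw [hm] at hEni
        obtain ⟨bm, hbm, hbmin⟩ := hEni
        have hbt : bm = t :=
          le_antisymm (hbmin sstar t (mem_of_getElem?' (ht_at i hiτ))) (ht bm)
        rw [hbt] at hbm
        have h2 : (StateAt C ms i st)[(StateAt C ms i st).length - 1]? = some t := by
          rw [← List.getLast?_eq_getElem?]
          exact hbm
        obtain ⟨hs, hpos⟩ := pos_unique hVi (ht_at i hiτ) h2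
        have hpre := hτmin i hiτ sstar
        have hlen1 := hpre.length_le
        rw [List.length_take] at hlen1
        rw [← hs] at hpos
        have hlt : istar < (StateAt C ms i sstar).length :=
          (List.getElem?_eq_some_iff.mp (ht_at i hiτ)).1
        have hk' := hk sstar
        omega
      | relocate src dst =>
        rw [hm] at hEni
        exact ⟨src, dst, hEni.1, rfl, hEni.2⟩
  -- the breaking move
  obtain ⟨hTCμ, hμn, srcμ, dstμ, hneμ, hrelμ, hnilμ⟩ := hreloc (Nat.find hex - 1) (by omega)
  obtain ⟨b0, hb0⟩ := exists_getLast? hnilμ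
  have hSμ1 : StateAt C ms (Nat.find hex - 1 + 1)
      = applyMove (StateAt C ms (Nat.find hex - 1)) (.relocate srcμ dstμ) := by
    rw [stateAt_succ C ms hμn, hrelμ]
  have hsrc' : StateAt C ms (Nat.find hex - 1 + 1) srcμ
      = (StateAt C ms (Nat.find hex - 1) srcμ).dropLast := by
    rw [hSμ1]; exact applyMove_relocate_src hneμ hb0
  have hdst' : StateAt C ms (Nat.find hex - 1 + 1) dstμ
      = StateAt C ms (Nat.find hex - 1) dstμ ++ [b0] := by
    rw [hSμ1]; exact applyMove_relocate_dst hneμ hb0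
  have hoth' : ∀ s, s ≠ srcμ → s ≠ dstμ →
      StateAt C ms (Nat.find hex - 1 + 1) s = StateAt C ms (Nat.find hex - 1) s := by
    intro s h1 h2; rw [hSμ1]; exact applyMove_relocate_other hb0 h1 h2
  have hbreak : ¬ ∀ s : Fin S,
      (C s).take ((C s).length - (k-1)) <+: StateAt C ms (Nat.find hex - 1 + 1) s := by
    rw [show Nat.find hex - 1 + 1 = Nat.find hex by omega]
    exact hτspec
  have hStμsrc : StateAt C ms (Nat.find hex - 1) srcμ
      = (C srcμ).take ((C srcμ).length - (k-1)) := by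
    obtain ⟨s, hs⟩ := not_forall.mp hbreak
    have hssrc : s = srcμ := by
      by_contra h1
      by_cases h2 : s = dstμ
      · rw [h2, hdst'] at hs
        exact hs ((hτmin (Nat.find hex - 1) (by omega) dstμ).trans (List.prefix_append _ _))
      · rw [hoth' s h1 h2] at hs
        exact hs (hτmin (Nat.find hex - 1) (by omega) s)
    rw [hssrc, hsrc'] at hs
    exact prefix_dropLast_eq (hτmin (Nat.find hex - 1) (by omega) srcμ) hs
  have hkB := hk srcμ
  have hPlen : ((C srcμ).take ((C srcμ).length - (k-1))).length
      = (C srcμ).length - (k-1) := by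
    rw [List.length_take]; omega
  have hb0C : (C srcμ)[(C srcμ).length - k]? = some b0 := by
    have h1 : (StateAt C ms (Nat.find hex - 1) srcμ)[(StateAt C ms (Nat.find hex - 1) srcμ).length - 1]?
        = some b0 := by
      rw [← List.getLast?_eq_getElem?]; exact hb0
    rw [hStμsrc, hPlen] at h1
    rw [List.getElem?_take, if_pos (by omega)] at h1
    rw [show (C srcμ).length - (k-1) - 1 = (C srcμ).length - k by omega] at h1
    exact h1
  have hTopK : ∀ j b', j < k → (C srcμ)[(C srcμ).length - k + j]? = some b' →
      b' ∈ TopK C k := by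
    intro j b' hjk hj
    refine ⟨srcμ, mem_of_getElem?' (i := j) ?_⟩
    rw [List.getElem?_drop]
    exact hj
  have hsameμ : ∀ i, i < (C srcμ).length - k →
      (StateAt C ms (Nat.find hex - 1) srcμ)[i]? = (C srcμ)[i]? := by
    intro i hi
    rw [hStμsrc, List.getElem?_take, if_pos (by omega)]
  have hb0_at : (StateAt C ms (Nat.find hex - 1) srcμ)[(C srcμ).length - k]? = some b0 := by
    rw [hStμsrc, List.getElem?_take, if_pos (by omega)]
    exact hb0C
  have hVμ : ValidC (StateAt C ms (Nat.find hex - 1)) := fun b => (hTCμ b).le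
  have hBPiff0 : BadlyPlaced (StateAt C ms (Nat.find hex - 1)) b0 ↔ BadlyPlaced C b0 := by
    rw [bp_iff hVμ hb0_at, bp_iff hV hb0C]
    constructor
    · rintro ⟨a, h1, i, h2, h3⟩
      exact ⟨a, h1, i, h2, by rw [← hsameμ i h2]; exact h3⟩
    · rintro ⟨a, h1, i, h2, h3⟩
      exact ⟨a, h1, i, h2, by rw [hsameμ i h2]; exact h3⟩
  have hBPafter : ∀ i (hin : i < ms.length) src dst b', i < Nat.find hex → src ≠ dst →
      ms.get ⟨i, hin⟩ = .relocate src dst → (StateAt C ms i src).getLast? = some b' →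
      b' ∈ TopK C k → BadlyPlaced C b' → BadlyPlaced (StateAt C ms (i+1)) b' := by
    intro i hin src dst b' hiτ hne hrel hlast hTop hBP
    obtain ⟨a, hamem, halt⟩ := hcond b' hTop hBP dst
    obtain ⟨ia, hia⟩ := List.getElem?_of_mem hamem
    have hia' : (StateAt C ms i dst)[ia]? = some a := prefix_getElem? (hτmin i hiτ dst) hia
    have hlenia : ia < (StateAt C ms i dst).length := (List.getElem?_eq_some_iff.mp hia').1
    have hdsteq : StateAt C ms (i+1) dst = StateAt C ms i dst ++ [b'] := by
      rw [stateAt_succ C ms hin, hrel]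
      exact applyMove_relocate_dst hne hlast
    refine ⟨dst, a, halt, ia, (StateAt C ms i dst).length, hlenia, ?_, ?_⟩
    · rw [hdsteq, List.getElem?_append, if_pos hlenia]; exact hia'
    · rw [hdsteq]; exact List.getElem?_concat_length
  have hnotBGμ : ¬ ∃ h : Nat.find hex - 1 < ms.length,
      QBG (StateAt C ms (Nat.find hex - 1)) (ms.get ⟨Nat.find hex - 1, h⟩) := by
    rintro ⟨h, b', hmb, hBPb, hBPa⟩
    obtain ⟨src', dst', heq, hne', hlast'⟩ := hmb
    obtain ⟨hs1, hs2⟩ := Move.relocate.inj (hrelμ.symm.trans heq)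
    rw [← hs1] at hlast'
    have hb' : b' = b0 := Option.some.inj (hlast'.symm.trans hb0)
    rw [hb'] at hBPb hBPa
    have hBC : BadlyPlaced C b0 := hBPiff0.mp hBPb
    have hafter := hBPafter (Nat.find hex - 1) hμn srcμ dstμ b0 (by omega) hneμ hrelμ hb0
      (hTopK 0 b0 (by omega) (by simpa using hb0C)) hBC
    rw [stateAt_succ C ms h] at hafter
    exact hBPa hafter
  have hAllμ : ∃ h : Nat.find hex - 1 < ms.length,
      RelocIn Set.univ (StateAt C ms (Nat.find hex - 1)) (ms.get ⟨Nat.find hex - 1, h⟩) :=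
    ⟨hμn, b0, Set.mem_univ b0, srcμ, dstμ, hrelμ, hneμ, hb0⟩
  -- blocks never touched keep their positions
  have hkeep : ∀ (b : Fin B) (p0 : ℕ), (C srcμ)[p0]? = some b →
      ∀ i, i ≤ Nat.find hex - 1 →
      (∀ j (hj : j < ms.length), j < i → ∀ src dst, ms.get ⟨j, hj⟩ = .relocate src dst →
        (StateAt C ms j src).getLast? ≠ some b) →
      ∀ q, q ≤ p0 → (StateAt C ms i srcμ)[q]? = (C srcμ)[q]? := by
    intro b p0 hb i
    induction i with
    | zero => intro _ _ q _; rfl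
    | succ i ihi =>
      intro hiμ hnm q hq
      have hprev := ihi (by omega) (fun j hj hji => hnm j hj (by omega))
      obtain ⟨-, hin', src, dst, hne, hrel, hnil⟩ := hreloc i (by omega)
      have hp0i : (StateAt C ms i srcμ)[p0]? = some b := by
        rw [hprev p0 le_rfl]; exact hb
      have hnotb : (StateAt C ms i src).getLast? ≠ some b := hnm i hin' (by omega) src dst hrel
      obtain ⟨b1, hb1⟩ := exists_getLast? hnil
      have hstep : StateAt C ms (i+1) = applyMove (StateAt C ms i) (.relocate src dst) := by
        rw [stateAt_succ C ms hin', hrel]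
      have hp0len : p0 < (StateAt C ms i srcμ).length := (List.getElem?_eq_some_iff.mp hp0i).1
      by_cases h1 : srcμ = src
      · have hbb1 : (StateAt C ms i srcμ).getLast? ≠ some b := by rw [h1]; exact hnotb
        have hp0ne : p0 ≠ (StateAt C ms i srcμ).length - 1 := by
          intro hh
          apply hbb1
          rw [List.getLast?_eq_getElem?, ← hh]
          exact hp0i
        have hDsrc : applyMove (StateAt C ms i) (.relocate src dst) srcμ
            = (StateAt C ms i srcμ).dropLast := by
          rw [h1]; exact applyMove_relocate_src hne hb1
        rw [hstep, hDsrc, List.getElem?_dropLast, if_pos (by omega), hprev q hq]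
      · by_cases h2 : srcμ = dst
        · have hDdst : applyMove (StateAt C ms i) (.relocate src dst) srcμ
              = StateAt C ms i srcμ ++ [b1] := by
            rw [h2]; exact applyMove_relocate_dst hne hb1
          rw [hstep, hDdst, List.getElem?_append, if_pos (by omega), hprev q hq]
        · have hDo : applyMove (StateAt C ms i) (.relocate src dst) srcμ
              = StateAt C ms i srcμ := applyMove_relocate_other hb1 h1 h2
          rw [hstep, hDo, hprev q hq]
  -- the k-1 blocks above b0 in the breaking stack
  have hchoice : ∀ r : ℕ, ∃ br : Fin B,
      r < k-1 → (C srcμ)[(C srcμ).length - k + (r+1)]? = some br := by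
    intro r
    by_cases hr : r < k-1
    · have hlt : (C srcμ).length - k + (r+1) < (C srcμ).length := by omega
      exact ⟨(C srcμ)[(C srcμ).length - k + (r+1)], fun _ => List.getElem?_eq_getElem hlt⟩
    · exact ⟨t, fun h' => absurd h' hr⟩
  choose brv hbrv using hchoice
  have hexm : ∀ r, r < k-1 → ∃ i, i < Nat.find hex - 1 ∧ ∃ (hi : i < ms.length), ∃ src dst,
      ms.get ⟨i, hi⟩ = .relocate src dst ∧ (StateAt C ms i src).getLast? = some (brv r) := by
    intro r hr
    by_contra hno
    have hnm : ∀ j (hj : j < ms.length), j < Nat.find hex - 1 → ∀ src dst,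
        ms.get ⟨j, hj⟩ = .relocate src dst →
        (StateAt C ms j src).getLast? ≠ some (brv r) := by
      intro j hj hjμ src dst hrel hlast
      exact hno ⟨j, hjμ, hj, src, dst, hrel, hlast⟩
    have hcontra := hkeep (brv r) ((C srcμ).length - k + (r+1)) (hbrv r hr)
      (Nat.find hex - 1) le_rfl hnm ((C srcμ).length - k + (r+1)) le_rfl
    rw [hStμsrc] at hcontra
    rw [List.getElem?_eq_none (by rw [hPlen]; omega), hbrv r hr] at hcontra
    simp at hcontra
  have hmfun : ∀ r : ℕ, ∃ i : ℕ, r < k-1 →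
      (i < Nat.find hex - 1 ∧ ∃ (hi : i < ms.length), ∃ src dst,
        ms.get ⟨i, hi⟩ = .relocate src dst ∧ (StateAt C ms i src).getLast? = some (brv r)) ∧
      (∀ j, j < i → ¬ (j < Nat.find hex - 1 ∧ ∃ (hj : j < ms.length), ∃ src dst,
        ms.get ⟨j, hj⟩ = .relocate src dst ∧ (StateAt C ms j src).getLast? = some (brv r))) := by
    intro r
    by_cases hr : r < k-1
    · exact ⟨Nat.find (hexm r hr), fun _ =>
        ⟨Nat.find_spec (hexm r hr), fun j hj => Nat.find_min (hexm r hr) hj⟩⟩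
    · exact ⟨0, fun h => absurd h hr⟩
  choose mfun hmfun' using hmfun
  have hmltμ : ∀ r, r < k-1 → mfun r < Nat.find hex - 1 := fun r hr => ((hmfun' r hr).1).1
  have hmprop : ∀ r, r < k-1 →
      (∃ h : mfun r < ms.length,
        RelocIn Set.univ (StateAt C ms (mfun r)) (ms.get ⟨mfun r, h⟩)) ∧
      ¬ (∃ h : mfun r < ms.length, QBG (StateAt C ms (mfun r)) (ms.get ⟨mfun r, h⟩)) := by
    intro r hr
    obtain ⟨⟨hmlt, hmn, src_r, dst_r, hrel_r, hlast_r⟩, hminim⟩ := hmfun' r hr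
    have hEnr := stateAt_enabled hAE hmn
    rw [hrel_r] at hEnr
    obtain ⟨hne_r, hnil_r⟩ := hEnr
    constructor
    · exact ⟨hmn, brv r, Set.mem_univ _, src_r, dst_r, hrel_r, hne_r, hlast_r⟩
    · have hnm : ∀ j (hj : j < ms.length), j < mfun r → ∀ src dst,
          ms.get ⟨j, hj⟩ = .relocate src dst →
          (StateAt C ms j src).getLast? ≠ some (brv r) := by
        intro j hj hjm src dst hrel hlast
        exact hminim j hjm ⟨by omega, hj, src, dst, hrel, hlast⟩
      have hkeep_r := hkeep (brv r) ((C srcμ).length - k + (r+1)) (hbrv r hr)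
        (mfun r) (by omega) hnm
      have hat : (StateAt C ms (mfun r) srcμ)[(C srcμ).length - k + (r+1)]? = some (brv r) := by
        rw [hkeep_r _ le_rfl]; exact hbrv r hr
      have hTCr : ∀ b, TotCount (StateAt C ms (mfun r)) b = 1 :=
        (hreloc (mfun r) (by omega)).1
      have hVr : ValidC (StateAt C ms (mfun r)) := fun b => (hTCr b).le
      have hBPiffr : BadlyPlaced (StateAt C ms (mfun r)) (brv r) ↔ BadlyPlaced C (brv r) := by
        rw [bp_iff hVr hat, bp_iff hV (hbrv r hr)]
        constructor
        · rintro ⟨a, h1, i, h2, h3⟩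
          exact ⟨a, h1, i, h2, by rw [← hkeep_r i (by omega)]; exact h3⟩
        · rintro ⟨a, h1, i, h2, h3⟩
          exact ⟨a, h1, i, h2, by rw [hkeep_r i (by omega)]; exact h3⟩
      rintro ⟨h, b', hmb, hBPb, hBPa⟩
      obtain ⟨src', dst', heq, hne', hlast'⟩ := hmb
      obtain ⟨hs1, hs2⟩ := Move.relocate.inj (hrel_r.symm.trans heq)
      rw [← hs1] at hlast'
      have hb' : b' = brv r := Option.some.inj (hlast'.symm.trans hlast_r)
      rw [hb'] at hBPb hBPa
      have hBC : BadlyPlaced C (brv r) := hBPiffr.mp hBPb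
      have hafter := hBPafter (mfun r) hmn src_r dst_r (brv r) (by omega) hne_r hrel_r hlast_r
        (hTopK (r+1) (brv r) (by omega) (hbrv r hr)) hBC
      rw [stateAt_succ C ms h] at hafter
      exact hBPa hafter
  -- the index set T
  have hTnotmem : (Nat.find hex - 1) ∉ (Finset.range (k-1)).image mfun := by
    intro hmem
    obtain ⟨r, hr, heq⟩ := Finset.mem_image.mp hmem
    have := hmltμ r (Finset.mem_range.mp hr)
    omega
  have hinj : Set.InjOn mfun ↑(Finset.range (k-1)) := by
    intro r hr r' hr' heq
    simp only [Finset.coe_range, Set.mem_Iio] at hr hr'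
    by_contra hne
    obtain ⟨⟨hm1, hmn1, s1, d1, hrel1, hlast1⟩, -⟩ := hmfun' r hr
    obtain ⟨⟨hm2, hmn2, s2, d2, hrel2, hlast2⟩, -⟩ := hmfun' r' hr'
    rw [heq] at hlast1
    have hfe : (⟨mfun r, hmn1⟩ : Fin ms.length) = ⟨mfun r', hmn2⟩ := Fin.ext heq
    have hgeteq : (Move.relocate s1 d1 : Move S) = Move.relocate s2 d2 :=
      hrel1.symm.trans ((congrArg ms.get hfe).trans hrel2)
    obtain ⟨he1, he2⟩ := Move.relocate.inj hgeteq
    rw [he1] at hlast1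
    have hbeq : brv r = brv r' := Option.some.inj (hlast1.symm.trans hlast2)
    have hp1 := hbrv r hr
    have hp2 := hbrv r' hr'
    rw [hbeq] at hp1
    have htot : TotCount C (brv r') = 1 := hC _
    have hcle := count_le_tot C (brv r') srcμ
    rcases Nat.lt_or_ge r r' with h | h
    · have := two_le_count
        (show (C srcμ).length - k + (r+1) < (C srcμ).length - k + (r'+1) by omega) hp1 hp2
      omega
    · have hlt : r' < r := by omega
      have := two_le_count
        (show (C srcμ).length - k + (r'+1) < (C srcμ).length - k + (r+1) by omega) hp2 hp1
      omega
  have hTcard : (insert (Nat.find hex - 1) ((Finset.range (k-1)).image mfun)).card = k := by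
    rw [Finset.card_insert_of_notMem hTnotmem, Finset.card_image_of_injOn hinj,
      Finset.card_range]
    omega
  have hTsub : (insert (Nat.find hex - 1) ((Finset.range (k-1)).image mfun))
      ⊆ Finset.range ms.length := by
    intro i hi
    rcases Finset.mem_insert.mp hi with rfl | hi
    · exact Finset.mem_range.mpr hμn
    · obtain ⟨r, hr, rfl⟩ := Finset.mem_image.mp hi
      have := hmltμ r (Finset.mem_range.mp hr)
      exact Finset.mem_range.mpr (by omega)
  -- final counting
  have hsumAll := countMoves_eq_sum (RelocIn Set.univ) ms C
  have hsumBG := countMoves_eq_sum QBG ms C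
  have hBGle := hclaim1.trans (le_of_eq hsumBG)
  refine le_trans ?_ (le_of_eq hsumAll.symm)
  have hpoint : ∀ i ∈ Finset.range ms.length,
      ((if (∃ h : i < ms.length, QBG (play C (ms.take i)) (ms.get ⟨i, h⟩)) then 1 else 0)
        + (if i ∈ insert (Nat.find hex - 1) ((Finset.range (k-1)).image mfun) then 1 else 0))
      ≤ (if (∃ h : i < ms.length, RelocIn Set.univ (play C (ms.take i)) (ms.get ⟨i, h⟩))
          then 1 else 0) := by
    intro i hir
    by_cases hiT : i ∈ insert (Nat.find hex - 1) ((Finset.range (k-1)).image mfun)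
    · rw [if_pos hiT]
      have hkey : (∃ h : i < ms.length,
            RelocIn Set.univ (play C (ms.take i)) (ms.get ⟨i, h⟩)) ∧
          ¬ (∃ h : i < ms.length, QBG (play C (ms.take i)) (ms.get ⟨i, h⟩)) := by
        rcases Finset.mem_insert.mp hiT with rfl | him
        · exact ⟨hAllμ, hnotBGμ⟩
        · obtain ⟨r, hr, rfl⟩ := Finset.mem_image.mp him
          exact hmprop r (Finset.mem_range.mp hr)
      rw [if_pos hkey.1, if_neg hkey.2]
    · rw [if_neg hiT]
      by_cases hbg : (∃ h : i < ms.length, QBG (play C (ms.take i)) (ms.get ⟨i, h⟩))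
      · rw [if_pos hbg]
        have hall : (∃ h : i < ms.length,
            RelocIn Set.univ (play C (ms.take i)) (ms.get ⟨i, h⟩)) := by
          obtain ⟨h, b, hmb, -, -⟩ := hbg
          exact ⟨h, b, Set.mem_univ b, hmb⟩
        rw [if_pos hall]
      · rw [if_neg hbg]
        split <;> omega
  have hsum2 := Finset.sum_le_sum hpoint
  rw [Finset.sum_add_distrib] at hsum2
  have hTsum : (∑ i ∈ Finset.range ms.length,
      (if i ∈ insert (Nat.find hex - 1) ((Finset.range (k-1)).image mfun) then 1 else 0)) = k := by
    rw [Finset.sum_ite_mem, Finset.inter_eq_right.mpr hTsub, ← Finset.card_eq_sum_ones,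
      hTcard]
  omega
end

section
/- (Property 4) Let C be an initial configuration of the BRP satisfying the condition of Property 4, i.e., in every experiment that relocates each block above the target block exactly once onto one of the other stacks, at least one of the relocated blocks ends badly placed. Then every feasible move sequence for C contains at least one non-BG relocation of a block of 𝔅⁴; that is, f_nonBG(𝔅⁴) ≥ 1. -/
namespace BRP4
variable {B S : ℕ}

noncomputable def csum (C : Config B S) (b : Fin B) : ℕ := ∑ s, (C s).count b

def PinL (l : List (Fin B)) (b : Fin B) : Prop :=
  ∃ p q, l = p ++ b :: q ∧ ∀ x ∈ p, b ≤ x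

def Pin (C : Config B S) (s : Fin S) (b : Fin B) : Prop :=
  PinL (C s) b

lemma PinL.mem {l : List (Fin B)} {b : Fin B} (h : PinL l b) : b ∈ l := by
  obtain ⟨p, q, rfl, -⟩ := h; simp

lemma PinL.append {l : List (Fin B)} {b : Fin B} (h : PinL l b) (L : List (Fin B)) :
    PinL (l ++ L) b := by
  obtain ⟨p, q, rfl, hle⟩ := h
  exact ⟨p, q ++ L, by simp, hle⟩

lemma PinL.dropLast {l : List (Fin B)} {b c : Fin B} (h : PinL l b)
    (hg : l.getLast? = some c) (hbc : b ≠ c) : PinL l.dropLast b := by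
  obtain ⟨p, q, rfl, hle⟩ := h
  rcases q with - | ⟨y, zs⟩
  · rw [List.getLast?_concat] at hg
    exact absurd (Option.some_inj.1 hg) hbc
  · refine ⟨p, (y :: zs).dropLast, ?_, hle⟩
    rw [List.dropLast_append_of_ne_nil (by simp), List.dropLast_cons₂]

lemma exists_min {α} [LinearOrder α] (l : List α) (h : l ≠ []) :
    ∃ m ∈ l, ∀ x ∈ l, m ≤ x := by
  induction l with
  | nil => exact absurd rfl h
  | cons a l ih =>
    rcases eq_or_ne l [] with rfl | hl
    · exact ⟨a, by simp⟩
    · obtain ⟨m, hm, hmin⟩ := ih hl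
      rcases le_total a m with hb | hb
      · exact ⟨a, by simp, by
          intro x hx
          rcases List.mem_cons.1 hx with rfl | hx
          · exact le_rfl
          · exact hb.trans (hmin x hx)⟩
      · exact ⟨m, List.mem_cons_of_mem _ hm, by
          intro x hx
          rcases List.mem_cons.1 hx with rfl | hx
          · exact hb
          · exact hmin x hx⟩

lemma mem_of_getLast? {α} {l : List α} {c : α} (h : l.getLast? = some c) : c ∈ l := by
  have hne : l ≠ [] := by rintro rfl; simp at h
  rw [List.getLast?_eq_getLast hne] at h
  exact (Option.some_injective _ h) ▸ List.getLast_mem hne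

lemma count_le_csum (C : Config B S) (s : Fin S) (b : Fin B) :
    (C s).count b ≤ csum C b :=
  Finset.single_le_sum (f := fun s => (C s).count b) (fun _ _ => Nat.zero_le _)
    (Finset.mem_univ s)

lemma csum_cross {C : Config B S} {b : Fin B} {s s' : Fin S} (h : s ≠ s')
    (h1 : b ∈ C s) (h2 : b ∈ C s') : 2 ≤ csum C b := by
  have e : ({s, s'} : Finset (Fin S)) ⊆ Finset.univ := Finset.subset_univ _
  have : ∑ x ∈ ({s, s'} : Finset (Fin S)), (C x).count b ≤ csum C b :=
    Finset.sum_le_sum_of_subset e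
  rw [Finset.sum_pair h] at this
  have c1 : 1 ≤ (C s).count b := List.count_pos_iff.2 h1
  have c2 : 1 ≤ (C s').count b := List.count_pos_iff.2 h2
  omega

lemma Pin.mem {C : Config B S} {s b} (h : Pin C s b) : b ∈ C s := by
  obtain ⟨p, q, hpq, -⟩ := h
  rw [hpq]; simp

lemma notBP_of_pin {C : Config B S} {s : Fin S} {b : Fin B}
    (hcnt : csum C b ≤ 1) (hp : Pin C s b) : ¬ BadlyPlaced C b := by
  rintro ⟨s', x, hxb, p', q', hlt, hgx, hgb⟩
  have hbmem : b ∈ C s := hp.mem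
  obtain ⟨p, q, hpq, hle⟩ := hp
  have hs' : s = s' := by
    by_contra hne
    have : b ∈ C s' := List.mem_of_getElem? hgb
    have := csum_cross hne hbmem this
    omega
  subst hs'
  have hcount : (C s).count b ≤ 1 := le_trans (count_le_csum C s b) hcnt
  rw [hpq, List.count_append, List.count_cons_self] at hcount
  have hbp : b ∉ p := by
    intro hmem
    have := List.count_pos_iff.2 hmem
    omega
  have hbq : b ∉ q := by
    intro hmem
    have := List.count_pos_iff.2 hmem
    omega
  rw [hpq] at hgx hgb
  have hq' : q' = p.length := by
    rcases lt_trichotomy q' p.length with h | h | h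
    · rw [List.getElem?_append, if_pos h] at hgb
      exact absurd (List.mem_of_getElem? hgb) hbp
    · exact h
    · rw [List.getElem?_append_right h.le] at hgb
      have h1 : 1 ≤ q' - p.length := by omega
      rcases Nat.exists_eq_add_of_le h1 with ⟨d, hd⟩
      rw [hd, Nat.add_comm] at hgb
      simp only [List.getElem?_cons_succ] at hgb
      exact absurd (List.mem_of_getElem? hgb) hbq
  rw [hq'] at hlt
  rw [List.getElem?_append, if_pos hlt] at hgx
  have : x ∈ p := List.mem_of_getElem? hgx
  exact absurd hxb (not_lt.2 (hle x this))

lemma le_of_notBP_concat {D : Config B S} {dst : Fin S} {a : Fin B} {l : List (Fin B)}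
    (hD : D dst = l ++ [a]) (h : ¬ BadlyPlaced D a) : ∀ x ∈ l, a ≤ x := by
  intro x hx
  by_contra hlt
  push_neg at hlt
  obtain ⟨n, hn, hxn⟩ := List.mem_iff_getElem.1 hx
  refine h ⟨dst, x, hlt, n, l.length, hn, ?_, ?_⟩
  · rw [hD, List.getElem?_append, if_pos (by simpa using hn), List.getElem?_eq_getElem hn, hxn]
  · rw [hD, List.getElem?_concat_length]

lemma count_update (C : Config B S) (s : Fin S) (L : List (Fin B)) (b : Fin B) :
    (fun x => ((Function.update C s L) x).count b)
      = Function.update (fun x => (C x).count b) s (L.count b) := by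
  funext x
  by_cases h : x = s
  · subst h; simp
  · simp [Function.update_of_ne h]

lemma csum_update (C : Config B S) (s : Fin S) (L : List (Fin B)) (b : Fin B) :
    csum (Function.update C s L) b = L.count b + ∑ x ∈ Finset.univ \ {s}, (C x).count b := by
  unfold csum
  rw [show (fun x => ((Function.update C s L) x).count b)
      = Function.update (fun x => (C x).count b) s (L.count b) from count_update C s L b] at *
  · exact Finset.sum_update_of_mem (Finset.mem_univ s) _ _
  
lemma csum_split (C : Config B S) (s : Fin S) (b : Fin B) :
    csum C b = (C s).count b + ∑ x ∈ Finset.univ \ {s}, (C x).count b := by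
  unfold csum
  rw [← Finset.erase_eq]
  exact (Finset.add_sum_erase _ _ (Finset.mem_univ s)).symm

lemma csum_applyMove_le (C : Config B S) (m : Move S) (b : Fin B) :
    csum (applyMove C m) b ≤ csum C b := by
  cases m with
  | retrieve s =>
    show csum (Function.update C s (C s).dropLast) b ≤ _
    rw [csum_update, csum_split C s b]
    have := (List.dropLast_sublist (C s)).count_le b
    omega
  | relocate src dst =>
    rcases hl : (C src).getLast? with - | c
    · simp only [applyMove, hl]; exact le_rfl
    · have hne : C src ≠ [] := by rintro h; rw [h] at hl; simp at hl
      have hdec : (C src).dropLast ++ [c] = C src := by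
        rw [List.getLast?_eq_getLast hne] at hl
        rw [← Option.some_inj.1 hl]
        exact List.dropLast_append_getLast hne
      by_cases hsd : src = dst
      · subst hsd
        simp only [applyMove, hl, Function.update_idem, Function.update_self]
        rw [hdec, Function.update_eq_self]
      · have key : applyMove C (.relocate src dst)
            = Function.update (Function.update C src (C src).dropLast) dst (C dst ++ [c]) := by
          simp only [applyMove, hl]
          rw [Function.update_of_ne (Ne.symm hsd)]
        rw [key, csum_update, csum_split C dst b]
        have h2 : ∑ x ∈ Finset.univ \ {dst}, ((Function.update C src (C src).dropLast) x).count b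
            = (C src).dropLast.count b + ∑ x ∈ (Finset.univ \ {dst}) \ {src}, (C x).count b := by
          rw [show (fun x => ((Function.update C src (C src).dropLast) x).count b)
              = Function.update (fun x => (C x).count b) src ((C src).dropLast.count b)
              from count_update _ _ _ b] at *
          exact Finset.sum_update_of_mem (by simp [hsd]) _ _
        rw [h2]
        have h3 : ∑ x ∈ Finset.univ \ {dst}, (C x).count b
            = (C src).count b + ∑ x ∈ (Finset.univ \ {dst}) \ {src}, (C x).count b := by
          rw [← Finset.erase_eq ((Finset.univ : Finset (Fin S)) \ {dst})]
          exact (Finset.add_sum_erase _ _ (by simp [hsd])).symm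
        rw [h3]
        have h4 : (C dst ++ [c]).count b = (C dst).count b + List.count b [c] :=
          List.count_append
        have h5 : (C src).count b = (C src).dropLast.count b + List.count b [c] := by
          conv_lhs => rw [← hdec]
          rw [List.count_append]
        omega

lemma pushAll_apply (ps : List (Fin B × Fin S)) (C0 : Config B S) (s : Fin S) :
    pushAll C0 ps s = C0 s ++ (ps.filter (fun p => p.2 = s)).map Prod.fst := by
  induction ps generalizing C0 with
  | nil => simp [pushAll]
  | cons p rest ih =>
    show pushAll (Function.update C0 p.2 (C0 p.2 ++ [p.1])) rest s = _
    rw [ih]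
    by_cases h : p.2 = s
    · subst h
      rw [Function.update_self]
      simp
    · rw [Function.update_of_ne (by simpa using Ne.symm h)]
      simp [h]

lemma final_contra (C : Config B S) (hC : IsConfig C) (sStar : Fin S) (i : ℕ)
    (h4 : P4Cond C sStar i) (ds : List (Fin S))
    (hlen : ds.length = (aboveList C sStar i).length)
    (hds : ∀ d ∈ ds, d ≠ sStar)
    (hF1 : ∀ (r : ℕ) (x : Fin B) (d : Fin S) (a : Fin B), ds[r]? = some d → (aboveList C sStar i)[r]? = some a →
        x ∈ C d → a ≤ x)
    (hF2 : ∀ (r' r : ℕ) (a' a : Fin B) (d : Fin S), r' < r → ds[r']? = some d → ds[r]? = some d →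
        (aboveList C sStar i)[r']? = some a' → (aboveList C sStar i)[r]? = some a → a ≤ a') :
    False := by
  set A := aboveList C sStar i with hA
  obtain ⟨b, hbA, hBP⟩ := h4 ds hlen hds
  suffices claim : ∀ s x y, StrictlyBelow (expResult C sStar i ds) s x y → y ∈ A → y ≤ x by
    obtain ⟨s, x, hxy, hSB⟩ := hBP
    exact absurd hxy (not_lt.2 (claim s x b hSB hbA))
  rintro s x y ⟨p, q, hpq, hgx, hgy⟩ hyA
  have hstack : ∀ s' : Fin S, expResult C sStar i ds s'
      = (Function.update C sStar ((C sStar).take (i+1))) s'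
        ++ ((A.zip ds).filter (fun pr => pr.2 = s')).map Prod.fst := by
    intro s'
    exact pushAll_apply _ _ _
  set base := (Function.update C sStar ((C sStar).take (i+1))) s with hbase
  set M := ((A.zip ds).filter (fun pr => pr.2 = s)).map Prod.fst with hM
  rw [hstack s] at hgx hgy
  have hydrop : y ∈ (C sStar).drop (i+1) := by
    have : y ∈ ((C sStar).drop (i+1)).reverse := hyA
    simpa using this
  have hcsum : csum C y = 1 := hC y
  by_cases hqb : q < base.length
  · rw [List.getElem?_append, if_pos hqb] at hgy
    have hybase : y ∈ base := List.mem_of_getElem? hgy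
    by_cases hs : s = sStar
    · subst hs
      rw [hbase, Function.update_self] at hybase
      have h2 : 2 ≤ (C s).count y := by
        conv_rhs => rw [← List.take_append_drop (i+1) (C s)]
        rw [List.count_append]
        have c1 := List.count_pos_iff.2 hybase
        have c2 := List.count_pos_iff.2 hydrop
        omega
      have := count_le_csum C s y
      omega
    · rw [hbase, Function.update_of_ne hs] at hybase
      have hyS : y ∈ C sStar := (List.drop_sublist _ _).mem hydrop
      have := csum_cross hs hybase hyS
      omega
  · push_neg at hqb
    rw [List.getElem?_append_right hqb] at hgy
    have hs : s ≠ sStar := by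
      rintro rfl
      have hnil : ((A.zip ds).filter (fun pr => pr.2 = s)) = [] := by
        rw [List.filter_eq_nil_iff]
        intro pr hpr
        have := (List.of_mem_zip hpr).2
        simpa using hds pr.2 this
      rw [hnil] at hgy
      simp at hgy
    -- y comes from M; find its zip index
    have exIdx : ∀ {n : ℕ} {z : Fin B}, M[n]? = some z →
        ∃ r : ℕ, A[r]? = some z ∧ ds[r]? = some s := by
      intro n z hz
      rw [hM, List.getElem?_map] at hz
      rcases hf : ((A.zip ds).filter (fun pr => pr.2 = s))[n]? with - | pr
      · rw [hf] at hz; simp at hz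
      · rw [hf] at hz
        simp only [Option.map_some] at hz
        have hprmem : pr ∈ (A.zip ds).filter (fun pr => pr.2 = s) := List.mem_of_getElem? hf
        rw [List.mem_filter] at hprmem
        obtain ⟨hprzip, hprs⟩ := hprmem
        have hprs' : pr.2 = s := by simpa using hprs
        obtain ⟨r, hr, hzr⟩ := List.getElem_of_mem hprzip
        rw [List.getElem_zip] at hzr
        have hrA : r < A.length := by
          rw [List.length_zip] at hr; omega
        have hrds : r < ds.length := by
          rw [List.length_zip] at hr; omega
        have e1 : A[r] = pr.1 := by
          have := congrArg Prod.fst hzr; simpa using this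
        have e2 : ds[r] = pr.2 := by
          have := congrArg Prod.snd hzr; simpa using this
        refine ⟨r, ?_, ?_⟩
        · rw [List.getElem?_eq_getElem hrA]
          exact congrArg some (e1.trans (Option.some_inj.1 hz))
        · rw [List.getElem?_eq_getElem hrds]
          exact congrArg some (e2.trans hprs')
    by_cases hpb : p < base.length
    · rw [List.getElem?_append, if_pos hpb] at hgx
      have hxbase : x ∈ base := List.mem_of_getElem? hgx
      rw [hbase, Function.update_of_ne hs] at hxbase
      obtain ⟨r, hrA, hrds⟩ := exIdx hgy
      exact hF1 r x s y hrds hrA hxbase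
    · push_neg at hpb
      rw [List.getElem?_append_right hpb] at hgx
      -- both in M: pairwise
      have h0 : List.Pairwise (fun pr qr : Fin B × Fin S => pr.2 = qr.2 → qr.1 ≤ pr.1)
          (A.zip ds) := by
        rw [List.pairwise_iff_getElem]
        intro r1 r2 h1 h2 h12
        rw [List.getElem_zip, List.getElem_zip]
        intro heq
        have hl1 : r1 < A.length := by rw [List.length_zip] at h1; omega
        have hl2 : r2 < A.length := by rw [List.length_zip] at h2; omega
        have hd1 : r1 < ds.length := by rw [List.length_zip] at h1; omega
        have hd2 : r2 < ds.length := by rw [List.length_zip] at h2; omega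
        exact hF2 r1 r2 _ _ (ds[r1]) h12
          (List.getElem?_eq_getElem hd1)
          (by rw [List.getElem?_eq_getElem hd2]; exact congrArg some heq.symm)
          (List.getElem?_eq_getElem hl1)
          (List.getElem?_eq_getElem hl2)
      have h1 : List.Pairwise (fun pr qr : Fin B × Fin S => qr.1 ≤ pr.1)
          ((A.zip ds).filter (fun pr => pr.2 = s)) := by
        refine ((h0.sublist (List.filter_sublist))).imp_of_mem ?_
        intro a b ha hb hR
        have ha2 : a.2 = s := by simpa using (List.mem_filter.1 ha).2
        have hb2 : b.2 = s := by simpa using (List.mem_filter.1 hb).2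
        exact hR (by rw [ha2, hb2])
      have hPW : List.Pairwise (fun u v : Fin B => v ≤ u) M :=
        List.pairwise_map.2 h1
      have hql : q - base.length < M.length := by
        have := List.getElem?_eq_some_iff.1 hgy
        exact this.1
      have hpl : p - base.length < M.length := lt_trans (by omega) hql
      have hpq' : p - base.length < q - base.length := by omega
      have := List.pairwise_iff_getElem.1 hPW _ _ hpl hql hpq'
      rw [List.getElem?_eq_getElem hpl] at hgx
      rw [List.getElem?_eq_getElem hql] at hgy
      rw [Option.some_inj.1 hgx] at this
      rw [Option.some_inj.1 hgy] at this
      exact this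

structure Inv (C : Config B S) (sStar : Fin S) (i : ℕ) (C' : Config B S)
    (j : ℕ) (ds : List (Fin S)) (E : List (Fin B)) : Prop where
  hj : j < (aboveList C sStar i).length
  hlen : ds.length = j
  hds : ∀ d ∈ ds, d ≠ sStar
  hcnt : ∀ b, csum C' b ≤ 1
  hT : C' sStar = (C sStar).take (i+1) ++ ((aboveList C sStar i).drop j).reverse ++ E
  hM : ∀ s : Fin S, s ≠ sStar → ∀ m ∈ C s, (∀ x ∈ C s, m ≤ x) → Pin C' s m
  hP : ∀ (r : ℕ) (b : Fin B) (d : Fin S), (aboveList C sStar i)[r]? = some b →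
        ds[r]? = some d → Pin C' d b
  hF1 : ∀ (r : ℕ) (x : Fin B) (d : Fin S) (a : Fin B), ds[r]? = some d →
        (aboveList C sStar i)[r]? = some a → x ∈ C d → a ≤ x
  hF2 : ∀ (r' r : ℕ) (a' a : Fin B) (d : Fin S), r' < r → ds[r']? = some d →
        ds[r]? = some d → (aboveList C sStar i)[r']? = some a' →
        (aboveList C sStar i)[r]? = some a → a ≤ a'

lemma step (C : Config B S) (hC : IsConfig C) (sStar : Fin S) (i : ℕ) (t : Fin B)
    (ht : ∀ b, t ≤ b) (hloc : (C sStar)[i]? = some t) (h4 : P4Cond C sStar i)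
    (C' : Config B S) (j : ℕ) (ds : List (Fin S)) (E : List (Fin B))
    (inv : Inv C sStar i C' j ds E) (m : Move S) (hen : Enabled C' m)
    (hnon : ¬ RelocNonBGIn (B4Set C sStar i) C' m) :
    ∃ j' ds' E', Inv C sStar i (applyMove C' m) j' ds' E' := by
  have hl := inv.hlen
  have htake : t ∈ (C sStar).take (i+1) := by
    have hi : ((C sStar).take (i+1))[i]? = some t := by
      rw [List.getElem?_take, if_pos (Nat.lt_succ_self i)]; exact hloc
    exact List.mem_of_getElem? hi
  have htC' : t ∈ C' sStar := by
    rw [inv.hT]; exact List.mem_append.2 (Or.inl (List.mem_append.2 (Or.inl htake)))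
  have hdropne : (aboveList C sStar i).drop j ≠ [] := by
    apply List.ne_nil_of_length_pos
    rw [List.length_drop]
    have := inv.hj
    omega
  cases m with
  | retrieve s =>
    exfalso
    obtain ⟨b, hlast, hmin⟩ := hen
    have hbt : b = t := le_antisymm (hmin sStar t htC') (ht b)
    subst hbt
    have hrevne : ((aboveList C sStar i).drop j).reverse ++ E ≠ [] := by
      intro h
      have h1 := (List.append_eq_nil_iff.1 h).1
      rw [List.reverse_eq_nil_iff] at h1
      exact hdropne h1
    by_cases hs : s = sStar
    · subst hs
      have hsplit : C' s = (C s).take (i+1) ++ (((aboveList C s i).drop j).reverse ++ E) := by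
        rw [inv.hT, List.append_assoc]
      have h1 : (((aboveList C s i).drop j).reverse ++ E).getLast? = some b := by
        rw [hsplit, List.getLast?_append] at hlast
        rcases hg : (((aboveList C s i).drop j).reverse ++ E).getLast? with - | z
        · rw [List.getLast?_eq_none_iff] at hg; exact absurd hg hrevne
        · rw [hg] at hlast; simpa using hlast
      have h2 := mem_of_getLast? h1
      have hcount : 2 ≤ (C' s).count b := by
        rw [hsplit, List.count_append]
        have c1 := List.count_pos_iff.2 htake
        have c2 := List.count_pos_iff.2 h2
        omega
      have hc1 := count_le_csum C' s b
      have hc2 := inv.hcnt b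
      omega
    · have h2 : b ∈ C' s := mem_of_getLast? hlast
      have hcr := csum_cross hs h2 htC'
      have hc2 := inv.hcnt b
      omega
  | relocate src dst =>
    obtain ⟨hsd, hsrcne⟩ := hen
    obtain ⟨c, hlast⟩ : ∃ c, (C' src).getLast? = some c :=
      ⟨(C' src).getLast hsrcne, List.getLast?_eq_getLast hsrcne⟩
    have happly : applyMove C' (Move.relocate src dst)
        = Function.update (Function.update C' src (C' src).dropLast) dst
            ((Function.update C' src (C' src).dropLast) dst ++ [c]) := by
      simp only [applyMove, hlast]
    have hdstval : applyMove C' (Move.relocate src dst) dst = C' dst ++ [c] := by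
      rw [happly, Function.update_self, Function.update_of_ne (Ne.symm hsd)]
    have hsrcval : applyMove C' (Move.relocate src dst) src = (C' src).dropLast := by
      rw [happly, Function.update_of_ne hsd, Function.update_self]
    have hother : ∀ s, s ≠ src → s ≠ dst → applyMove C' (Move.relocate src dst) s = C' s := by
      intro s h1 h2
      rw [happly, Function.update_of_ne h2, Function.update_of_ne h1]
    have hBG : c ∈ B4Set C sStar i →
        BadlyPlaced C' c ∧ ¬ BadlyPlaced (applyMove C' (Move.relocate src dst)) c := by
      intro hc
      by_contra h
      exact hnon ⟨c, hc, ⟨src, dst, rfl, hsd, hlast⟩, h⟩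
    have hcnt' : ∀ b, csum (applyMove C' (Move.relocate src dst)) b ≤ 1 :=
      fun b => le_trans (csum_applyMove_le C' _ b) (inv.hcnt b)
    have pinstep : ∀ (s : Fin S) (b : Fin B), (s = src → b ≠ c) → Pin C' s b →
        Pin (applyMove C' (Move.relocate src dst)) s b := by
      intro s b hbc hp
      by_cases h1 : s = dst
      · show PinL _ b
        rw [h1, hdstval]
        rw [h1] at hp
        exact (show PinL (C' dst) b from hp).append [c]
      · by_cases h2 : s = src
        · show PinL _ b
          rw [h2, hsrcval]
          rw [h2] at hp
          exact (show PinL (C' src) b from hp).dropLast hlast (hbc h2)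
        · show PinL _ b
          rw [hother s h2 h1]
          exact hp
    by_cases hsrc : src = sStar
    · subst hsrc
      rcases eq_or_ne E [] with rfl | hE
      · -- the next block of A is relocated to dst
        obtain ⟨a, hAj⟩ : ∃ a, (aboveList C src i)[j]? = some a :=
          ⟨_, List.getElem?_eq_getElem inv.hj⟩
        obtain ⟨hjl, haj⟩ := List.getElem?_eq_some_iff.1 hAj
        have hdropc : (aboveList C src i).drop j = a :: (aboveList C src i).drop (j+1) := by
          have h0 := List.drop_eq_getElem_cons hjl
          rw [haj] at h0
          exact h0
        have hsplit : C' src = ((C src).take (i+1)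
            ++ ((aboveList C src i).drop (j+1)).reverse) ++ [a] := by
          rw [inv.hT, hdropc]
          simp [List.reverse_cons, List.append_assoc]
        have hca : c = a := by
          rw [hsplit, List.getLast?_concat] at hlast
          exact (Option.some_inj.1 hlast).symm
        subst hca
        have hc4 : c ∈ B4Set C src i :=
          Set.mem_union_left _ (show c ∈ {b | b ∈ aboveList C src i} from
            List.mem_of_getElem? hAj)
        obtain ⟨hBPb, hBPa⟩ := hBG hc4
        have hlearn : ∀ x ∈ C' dst, c ≤ x := le_of_notBP_concat hdstval hBPa
        have hds' : ∀ d ∈ ds ++ [dst], d ≠ src := by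
          intro d hd
          rcases List.mem_append.1 hd with h | h
          · exact inv.hds d h
          · simp at h; subst h; exact Ne.symm hsd
        have hlen' : (ds ++ [dst]).length = j + 1 := by simp [inv.hlen]
        have hgds : ∀ (r : ℕ) (d : Fin S), (ds ++ [dst])[r]? = some d →
            (r < j ∧ ds[r]? = some d) ∨ (r = j ∧ d = dst) := by
          intro r d h
          by_cases hr : r < ds.length
          · rw [List.getElem?_append, if_pos hr] at h
            exact Or.inl ⟨by omega, h⟩
          · push_neg at hr
            have hb := (List.getElem?_eq_some_iff.1 h).1
            rw [List.length_append] at hb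
            simp at hb
            have hrj : r = ds.length := by omega
            rw [List.getElem?_append_right hr, hrj, Nat.sub_self] at h
            simp at h
            exact Or.inr ⟨by omega, h.symm⟩
        have hF1j : ∀ x ∈ C dst, c ≤ x := by
          intro x hx
          obtain ⟨mm, hmm, hmin⟩ := exists_min (C dst) (List.ne_nil_of_mem hx)
          have hpin := inv.hM dst (Ne.symm hsd) mm hmm hmin
          exact le_trans (hlearn mm hpin.mem) (hmin x hx)
        have hF2j : ∀ (r' : ℕ) (c' : Fin B), ds[r']? = some dst →
            (aboveList C src i)[r']? = some c' → c ≤ c' := by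
          intro r' c' hd' ha'
          exact hlearn c' (inv.hP r' c' dst ha' hd').mem
        have hF1' : ∀ (r : ℕ) (x : Fin B) (d : Fin S) (a0 : Fin B),
            (ds ++ [dst])[r]? = some d → (aboveList C src i)[r]? = some a0 →
            x ∈ C d → a0 ≤ x := by
          intro r x d a0 hd ha0 hx
          rcases hgds r d hd with ⟨hr, hdr⟩ | ⟨hq, rfl⟩
          · exact inv.hF1 r x d a0 hdr ha0 hx
          · subst hq
            have : c = a0 := Option.some_inj.1 (hAj.symm.trans ha0)
            rw [← this]
            exact hF1j x hx
        have hF2' : ∀ (r' r : ℕ) (c' a0 : Fin B) (d : Fin S), r' < r →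
            (ds ++ [dst])[r']? = some d → (ds ++ [dst])[r]? = some d →
            (aboveList C src i)[r']? = some c' → (aboveList C src i)[r]? = some a0 →
            a0 ≤ c' := by
          intro r' r c' a0 d hlt hd' hd ha' ha0
          rcases hgds r d hd with ⟨hr, hdr⟩ | ⟨hq, rfl⟩
          · rcases hgds r' d hd' with ⟨hr', hdr'⟩ | ⟨hq', -⟩
            · exact inv.hF2 r' r c' a0 d hlt hdr' hdr ha' ha0
            · omega
          · subst hq
            rcases hgds r' d hd' with ⟨hr', hdr'⟩ | ⟨hq', -⟩
            · have : c = a0 := Option.some_inj.1 (hAj.symm.trans ha0)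
              rw [← this]
              exact hF2j r' c' hdr' ha'
            · omega
        have hj1 : j + 1 ≤ (aboveList C src i).length := inv.hj
        rcases eq_or_lt_of_le hj1 with heq | hlt2
        · exact (final_contra C hC src i h4 (ds ++ [dst]) (hlen'.trans heq) hds'
            hF1' hF2').elim
        · refine ⟨j+1, ds ++ [dst], [], hlt2, hlen', hds', hcnt', ?_, ?_, ?_, hF1', hF2'⟩
          · rw [hsrcval, hsplit, List.dropLast_concat]
            simp [List.append_assoc]
          · intro s hs mm hm hmin
            exact pinstep s mm (fun h => absurd h hs) (inv.hM s hs mm hm hmin)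
          · intro r b d ha hd
            rcases hgds r d hd with ⟨hr, hdr⟩ | ⟨hq, rfl⟩
            · have hdne : d ≠ src := inv.hds d (List.mem_of_getElem? hdr)
              exact pinstep d b (fun h => absurd h hdne) (inv.hP r b d ha hdr)
            · subst hq
              have hab : c = b := Option.some_inj.1 (hAj.symm.trans ha)
              rw [← hab]
              show PinL _ c
              rw [hdstval]
              exact ⟨C' d, [], rfl, hlearn⟩
      · -- a junk block on top of sStar is relocated
        have hsplit : C' src = ((C src).take (i+1)
            ++ ((aboveList C src i).drop j).reverse) ++ E := by
          rw [inv.hT, List.append_assoc]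
        refine ⟨j, ds, E.dropLast, inv.hj, inv.hlen, inv.hds, hcnt', ?_, ?_, ?_,
          inv.hF1, inv.hF2⟩
        · rw [hsrcval, hsplit, List.dropLast_append_of_ne_nil hE, List.append_assoc]
        · intro s hs mm hm hmin
          exact pinstep s mm (fun h => absurd h hs) (inv.hM s hs mm hm hmin)
        · intro r b d ha hd
          have hdne : d ≠ src := inv.hds d (List.mem_of_getElem? hd)
          exact pinstep d b (fun h => absurd h hdne) (inv.hP r b d ha hd)
    · -- src is not sStar
      have hcnot : c ∉ B4Set C sStar i := by
        intro hc
        have hBPc := (hBG hc).1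
        rcases (Set.mem_union _ _ _).1 hc with hcA | hcB
        · have hcA' : c ∈ aboveList C sStar i := hcA
          obtain ⟨r, hrlen, hrc⟩ := List.getElem_of_mem hcA'
          by_cases hrj : r < j
          · have hrds : r < ds.length := by omega
            have hpin := inv.hP r c (ds[r]'hrds)
              (by rw [List.getElem?_eq_getElem hrlen, hrc])
              (List.getElem?_eq_getElem hrds)
            exact notBP_of_pin (inv.hcnt c) hpin hBPc
          · have hcd : c ∈ (aboveList C sStar i).drop j := by
              have hh : ((aboveList C sStar i).drop j)[r - j]? = some c := by
                rw [List.getElem?_drop, show j + (r - j) = r by omega,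
                  List.getElem?_eq_getElem hrlen, hrc]
              exact List.mem_of_getElem? hh
            have h1 : c ∈ C' sStar := by
              rw [inv.hT]
              exact List.mem_append.2 (Or.inl (List.mem_append.2 (Or.inr
                (List.mem_reverse.2 hcd))))
            have h2 : c ∈ C' src := mem_of_getLast? hlast
            have hcr := csum_cross hsrc h2 h1
            have := inv.hcnt c
            omega
        · obtain ⟨s₀, hs₀, hcmem, hcmin⟩ := hcB
          have hpin := inv.hM s₀ hs₀ c hcmem hcmin
          exact notBP_of_pin (inv.hcnt c) hpin hBPc
      have hMnew : ∀ s : Fin S, s ≠ sStar → ∀ m ∈ C s, (∀ x ∈ C s, m ≤ x) →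
          Pin (applyMove C' (Move.relocate src dst)) s m := by
        intro s hs mm hm hmin
        refine pinstep s mm (fun _ hmc => hcnot ?_) (inv.hM s hs mm hm hmin)
        exact hmc ▸ Set.mem_union_right _ ⟨s, hs, hm, hmin⟩
      have hPnew : ∀ (r : ℕ) (b : Fin B) (d : Fin S),
          (aboveList C sStar i)[r]? = some b → ds[r]? = some d →
          Pin (applyMove C' (Move.relocate src dst)) d b := by
        intro r b d ha hd
        refine pinstep d b (fun _ hbc => hcnot ?_) (inv.hP r b d ha hd)
        exact hbc ▸ Set.mem_union_left _ (show b ∈ {x | x ∈ aboveList C sStar i} from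
          List.mem_of_getElem? ha)
      by_cases hdst : dst = sStar
      · subst hdst
        refine ⟨j, ds, E ++ [c], inv.hj, inv.hlen, inv.hds, hcnt', ?_, hMnew, hPnew,
          inv.hF1, inv.hF2⟩
        rw [hdstval, inv.hT]
        simp [List.append_assoc]
      · refine ⟨j, ds, E, inv.hj, inv.hlen, inv.hds, hcnt', ?_, hMnew, hPnew,
          inv.hF1, inv.hF2⟩
        rw [hother sStar (Ne.symm hsrc) (Ne.symm hdst), inv.hT]

lemma run (C : Config B S) (hC : IsConfig C) (sStar : Fin S) (i : ℕ) (t : Fin B)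
    (ht : ∀ b, t ≤ b) (hloc : (C sStar)[i]? = some t) (h4 : P4Cond C sStar i) :
    ∀ (ms : List (Move S)) (C' : Config B S) (j : ℕ) (ds : List (Fin S)) (E : List (Fin B)),
      Inv C sStar i C' j ds E → Feasible C' ms →
      countMoves (RelocNonBGIn (B4Set C sStar i)) C' ms = 0 → False := by
  intro ms
  induction ms with
  | nil =>
    intro C' j ds E inv hf _
    obtain ⟨-, hend⟩ := hf
    have hnil : C' sStar = [] := hend sStar
    rw [inv.hT] at hnil
    have h1 := (List.append_eq_nil_iff.1 hnil).1
    have h2 := (List.append_eq_nil_iff.1 h1).2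
    rw [List.reverse_eq_nil_iff] at h2
    have hdropne : (aboveList C sStar i).drop j ≠ [] := by
      apply List.ne_nil_of_length_pos
      rw [List.length_drop]
      have := inv.hj
      omega
    exact hdropne h2
  | cons m ms ih =>
    intro C' j ds E inv hf hcnt
    obtain ⟨hall, hend⟩ := hf
    have hall' : Enabled C' m ∧ AllEnabled (applyMove C' m) ms := hall
    have hfeas' : Feasible (applyMove C' m) ms := ⟨hall'.2, fun s => hend s⟩
    have hsplitc : countMoves (RelocNonBGIn (B4Set C sStar i)) C' (m :: ms)
        = (@ite ℕ (RelocNonBGIn (B4Set C sStar i) C' m) (Classical.propDecidable _) 1 0)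
          + countMoves (RelocNonBGIn (B4Set C sStar i)) (applyMove C' m) ms := rfl
    rw [hsplitc] at hcnt
    have hnon : ¬ RelocNonBGIn (B4Set C sStar i) C' m := by
      intro h
      rw [if_pos h] at hcnt
      omega
    rw [if_neg hnon] at hcnt
    obtain ⟨j', ds', E', inv'⟩ := step C hC sStar i t ht hloc h4 C' j ds E inv m hall'.1 hnon
    exact ih (applyMove C' m) j' ds' E' inv' hfeas' (by omega)

lemma init (C : Config B S) (hC : IsConfig C) (sStar : Fin S) (i : ℕ)
    (h4 : P4Cond C sStar i) : Inv C sStar i C 0 [] [] := by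
  have hj : 0 < (aboveList C sStar i).length := by
    by_contra h
    push_neg at h
    have hA0 : aboveList C sStar i = [] := by
      cases hA : aboveList C sStar i with
      | nil => rfl
      | cons x xs => rw [hA] at h; simp at h
    obtain ⟨b, hb, -⟩ := h4 [] (by rw [hA0]; rfl) (by simp)
    rw [hA0] at hb
    simp at hb
  refine ⟨hj, rfl, by simp, fun b => le_of_eq (hC b), ?_, ?_, ?_, ?_, ?_⟩
  · show C sStar = (C sStar).take (i+1) ++ ((aboveList C sStar i).drop 0).reverse ++ []
    rw [List.drop_zero, List.append_nil]
    show C sStar = _ ++ ((C sStar).drop (i+1)).reverse.reverse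
    rw [List.reverse_reverse, List.take_append_drop]
  · intro s hs m hm hmin
    obtain ⟨p, q, hpq⟩ := List.append_of_mem hm
    exact ⟨p, q, hpq, fun x hx => hmin x (by rw [hpq]; exact List.mem_append.2 (Or.inl hx))⟩
  · intro r b d _ hd; simp at hd
  · intro r x d a hd; simp at hd
  · intro r' r a' a d _ hd; simp at hd

noncomputable def total (C' : Config B S) : ℕ := ∑ s, (C' s).length

lemma total_update (C' : Config B S) (s : Fin S) (L : List (Fin B)) :
    total (Function.update C' s L) = L.length + ∑ x ∈ Finset.univ \ {s}, (C' x).length := by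
  unfold total
  rw [show (fun x => ((Function.update C' s L) x).length)
      = Function.update (fun x => (C' x).length) s L.length by
    funext x
    by_cases h : x = s
    · subst h; simp
    · simp [Function.update_of_ne h]]
  exact Finset.sum_update_of_mem (Finset.mem_univ s) _ _

lemma total_split (C' : Config B S) (s : Fin S) :
    total C' = (C' s).length + ∑ x ∈ Finset.univ \ {s}, (C' x).length := by
  unfold total
  rw [← Finset.erase_eq]
  exact (Finset.add_sum_erase _ _ (Finset.mem_univ s)).symm

lemma inner (hS : 2 ≤ S) : ∀ (L : ℕ) (C' : Config B S) (s₁ : Fin S) (bmin : Fin B),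
    (C' s₁).length ≤ L → bmin ∈ C' s₁ → (∀ s, ∀ x ∈ C' s, bmin ≤ x) →
    (∀ C'' : Config B S, total C'' < total C' → ∃ ms, Feasible C'' ms) →
    ∃ ms, Feasible C' ms := by
  intro L
  induction L with
  | zero =>
    intro C' s₁ bmin hlen hmem _ _
    rw [Nat.le_zero, List.length_eq_zero_iff] at hlen
    rw [hlen] at hmem
    simp at hmem
  | succ L ihL =>
    intro C' s₁ bmin hlen hmem hminall hIH
    have hnen : C' s₁ ≠ [] := by intro h; rw [h] at hmem; simp at hmem
    obtain ⟨c, hg⟩ : ∃ c, (C' s₁).getLast? = some c :=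
      ⟨(C' s₁).getLast hnen, List.getLast?_eq_getLast hnen⟩
    have hdec : (C' s₁).dropLast ++ [c] = C' s₁ := by
      rw [List.getLast?_eq_getLast hnen] at hg
      rw [← Option.some_inj.1 hg]
      exact List.dropLast_append_getLast hnen
    have hlpos : 0 < (C' s₁).length := List.length_pos_iff.2 hnen
    by_cases hc : c = bmin
    · -- retrieve
      have hen : Enabled C' (.retrieve s₁) :=
        ⟨c, hg, fun s' b' hb' => hc ▸ hminall s' b' hb'⟩
      have happ : applyMove C' (.retrieve s₁) = Function.update C' s₁ (C' s₁).dropLast := rfl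
      have htot : total (applyMove C' (.retrieve s₁)) < total C' := by
        rw [happ, total_update, total_split C' s₁]
        have : (C' s₁).dropLast.length = (C' s₁).length - 1 := List.length_dropLast
        omega
      obtain ⟨ms, hms⟩ := hIH _ htot
      exact ⟨.retrieve s₁ :: ms, (show AllEnabled C' _ from ⟨hen, hms.1⟩), fun s => hms.2 s⟩
    · -- relocate to another stack
      obtain ⟨s₂, hs₂⟩ : ∃ s₂ : Fin S, s₂ ≠ s₁ := by
        by_cases h : (s₁ : ℕ) = 0
        · exact ⟨⟨1, by omega⟩, by
            intro he; rw [Fin.ext_iff] at he; simp at he; omega⟩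
        · exact ⟨⟨0, by omega⟩, by
            intro he; rw [Fin.ext_iff] at he; simp at he; omega⟩
      have hen : Enabled C' (.relocate s₁ s₂) := ⟨Ne.symm hs₂, hnen⟩
      have happly : applyMove C' (Move.relocate s₁ s₂)
          = Function.update (Function.update C' s₁ (C' s₁).dropLast) s₂
              ((Function.update C' s₁ (C' s₁).dropLast) s₂ ++ [c]) := by
        simp only [applyMove, hg]
      have hdstval : applyMove C' (Move.relocate s₁ s₂) s₂ = C' s₂ ++ [c] := by
        rw [happly, Function.update_self, Function.update_of_ne hs₂]
      have hsrcval : applyMove C' (Move.relocate s₁ s₂) s₁ = (C' s₁).dropLast := by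
        rw [happly, Function.update_of_ne (Ne.symm hs₂), Function.update_self]
      have hother : ∀ s, s ≠ s₁ → s ≠ s₂ → applyMove C' (Move.relocate s₁ s₂) s = C' s := by
        intro s h1 h2
        rw [happly, Function.update_of_ne h2, Function.update_of_ne h1]
      have hDlen : (applyMove C' (Move.relocate s₁ s₂) s₁).length ≤ L := by
        rw [hsrcval, List.length_dropLast]
        omega
      have hDmem : bmin ∈ applyMove C' (Move.relocate s₁ s₂) s₁ := by
        rw [hsrcval]
        rw [← hdec] at hmem
        rcases List.mem_append.1 hmem with h | h
        · exact h
        · simp at h; exact absurd h.symm hc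
      have hDmin : ∀ s, ∀ x ∈ applyMove C' (Move.relocate s₁ s₂) s, bmin ≤ x := by
        intro s x hx
        by_cases h1 : s = s₂
        · subst h1
          rw [hdstval] at hx
          rcases List.mem_append.1 hx with h | h
          · exact hminall _ x h
          · simp at h; subst h; exact hminall s₁ x (mem_of_getLast? hg)
        · by_cases h2 : s = s₁
          · subst h2
            rw [hsrcval] at hx
            exact hminall s x ((List.dropLast_sublist _).mem hx)
          · rw [hother s h2 h1] at hx
            exact hminall s x hx
      have hDtot : total (applyMove C' (Move.relocate s₁ s₂)) = total C' := by
        have hkey : applyMove C' (Move.relocate s₁ s₂)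
            = Function.update (Function.update C' s₁ (C' s₁).dropLast) s₂ (C' s₂ ++ [c]) := by
          rw [happly, Function.update_of_ne hs₂]
        rw [hkey, total_update, total_split C' s₂]
        have h2 : ∑ x ∈ Finset.univ \ {s₂}, ((Function.update C' s₁ (C' s₁).dropLast) x).length
            = (C' s₁).dropLast.length + ∑ x ∈ (Finset.univ \ {s₂}) \ {s₁}, (C' x).length := by
          rw [show (fun x => ((Function.update C' s₁ (C' s₁).dropLast) x).length)
              = Function.update (fun x => (C' x).length) s₁ ((C' s₁).dropLast.length) by
            funext x
            by_cases h : x = s₁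
            · subst h; simp
            · simp [Function.update_of_ne h]]
          exact Finset.sum_update_of_mem (by simp [Ne.symm hs₂]) _ _
        rw [h2]
        have h3 : ∑ x ∈ Finset.univ \ {s₂}, (C' x).length
            = (C' s₁).length + ∑ x ∈ (Finset.univ \ {s₂}) \ {s₁}, (C' x).length := by
          rw [← Finset.erase_eq ((Finset.univ : Finset (Fin S)) \ {s₂})]
          exact (Finset.add_sum_erase _ _ (by simp [Ne.symm hs₂])).symm
        rw [h3]
        have h5 : (C' s₂ ++ [c]).length = (C' s₂).length + 1 := by simp
        have h6 : (C' s₁).dropLast.length = (C' s₁).length - 1 := List.length_dropLast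
        omega
      obtain ⟨ms, hms⟩ := ihL (applyMove C' (Move.relocate s₁ s₂)) s₁ bmin hDlen hDmem hDmin
        (fun C'' hh => hIH C'' (by rw [hDtot] at hh; exact hh))
      exact ⟨.relocate s₁ s₂ :: ms, (show AllEnabled C' _ from ⟨hen, hms.1⟩),
        fun s => hms.2 s⟩

lemma exists_feasible (hS : 2 ≤ S) : ∀ (N : ℕ) (C' : Config B S), total C' ≤ N →
    ∃ ms, Feasible C' ms := by
  intro N
  induction N with
  | zero =>
    intro C' h
    refine ⟨[], trivial, fun s => ?_⟩
    show C' s = []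
    rw [← List.length_eq_zero_iff]
    have h1 : (C' s).length ≤ total C' := by
      unfold total
      exact Finset.single_le_sum (f := fun s => (C' s).length) (fun _ _ => Nat.zero_le _)
        (Finset.mem_univ s)
    omega
  | succ N ihN =>
    intro C' h
    by_cases h0 : ∀ s, C' s = []
    · exact ⟨[], trivial, fun s => h0 s⟩
    · push_neg at h0
      obtain ⟨s₀, hs₀⟩ := h0
      obtain ⟨b0, hb0⟩ := List.exists_mem_of_ne_nil _ hs₀
      classical
      have hTne : (Finset.univ.filter (fun b : Fin B => ∃ s, b ∈ C' s)).Nonempty :=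
        ⟨b0, Finset.mem_filter.2 ⟨Finset.mem_univ _, s₀, hb0⟩⟩
      set bmin := (Finset.univ.filter (fun b : Fin B => ∃ s, b ∈ C' s)).min' hTne with hbm
      obtain ⟨s₁, hs₁⟩ : ∃ s, bmin ∈ C' s := by
        have := Finset.min'_mem _ hTne
        rw [Finset.mem_filter] at this
        exact this.2
      have hminall : ∀ s, ∀ x ∈ C' s, bmin ≤ x := by
        intro s x hx
        exact Finset.min'_le _ x (Finset.mem_filter.2 ⟨Finset.mem_univ _, s, hx⟩)
      exact inner hS (C' s₁).length C' s₁ bmin le_rfl hs₁ hminall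
        (fun C'' hh => ihN C'' (by omega))

end BRP4

/-- Property 4: if the target block `t` (the block of minimum
label) sits at position `i` of stack `sStar` and `C` satisfies the condition of
Property 4 (in every experiment relocating each block above `t` exactly once onto
the other stacks, some relocated block ends badly placed), then every feasible
move sequence contains at least one non-BG relocation of a block of `𝔅⁴`;
that is, `f_nonBG(𝔅⁴) ≥ 1`. -/
theorem brp_property4 {B S : ℕ} (hS : 2 ≤ S) (hB : 1 ≤ B)
    (C : Config B S) (hC : IsConfig C)
    (sStar : Fin S) (i : ℕ) (t : Fin B)
    (ht : ∀ b, t ≤ b) (hloc : (C sStar)[i]? = some t)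
    (h4 : P4Cond C sStar i) :
    (∀ ms, Feasible C ms → 1 ≤ countMoves (RelocNonBGIn (B4Set C sStar i)) C ms) ∧
    1 ≤ fNonBG C (B4Set C sStar i) := by
  have part1 : ∀ ms, Feasible C ms →
      1 ≤ countMoves (RelocNonBGIn (B4Set C sStar i)) C ms := by
    intro ms hms
    by_contra h
    push_neg at h
    have h0 : countMoves (RelocNonBGIn (B4Set C sStar i)) C ms = 0 := by omega
    exact BRP4.run C hC sStar i t ht hloc h4 ms C 0 [] []
      (BRP4.init C hC sStar i h4) hms h0
  refine ⟨part1, ?_⟩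
  obtain ⟨ms, hms⟩ := BRP4.exists_feasible hS (BRP4.total C) C le_rfl
  have hne : {n | ∃ ms, Feasible C ms ∧
      countMoves (RelocNonBGIn (B4Set C sStar i)) C ms = n}.Nonempty := ⟨_, ms, hms, rfl⟩
  have hmem := Nat.sInf_mem hne
  obtain ⟨ms', hms', hcount⟩ := hmem
  unfold fNonBG fMin
  rw [← hcount]
  exact part1 ms' hms'
end

section
/- (Validity of LB-N) Let C be an initial configuration of the BRP satisfying the condition of Property 4, and let 𝔅¹ be the set of blocks badly placed in C. Then f(Fin B) ≥ |𝔅¹| + 1. -/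
namespace LBN
open List Classical

variable {B S : ℕ}

/-- Every block occurs at most once among the stacks. -/
def AtMostOnce (D : Config B S) : Prop :=
  ∀ b : Fin B, (∑ s : Fin S, (D s).count b) ≤ 1

lemma two_le_sum (f : Fin S → ℕ) {s s' : Fin S} (h : s ≠ s')
    (h1 : 1 ≤ f s) (h2 : 1 ≤ f s') : 2 ≤ ∑ x : Fin S, f x := by
  classical
  have hmem : s' ∈ (Finset.univ : Finset (Fin S)).erase s := by
    simp [Finset.mem_erase, Ne.symm h]
  have h3 : f s' ≤ ∑ x ∈ Finset.univ.erase s, f x :=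
    Finset.single_le_sum (fun _ _ => Nat.zero_le _) hmem
  have h4 : f s + ∑ x ∈ Finset.univ.erase s, f x = ∑ x : Fin S, f x :=
    Finset.add_sum_erase _ _ (Finset.mem_univ s)
  omega

lemma count_pos_of_mem {b : Fin B} {l : List (Fin B)} (h : b ∈ l) : 1 ≤ l.count b :=
  List.count_pos_iff.2 h

lemma amo_unique_stack {D : Config B S} (hD : AtMostOnce D) {b : Fin B} {s s' : Fin S}
    (h1 : b ∈ D s) (h2 : b ∈ D s') : s = s' := by
  by_contra hne
  have h3 := two_le_sum (fun x => (D x).count b) hne (count_pos_of_mem h1) (count_pos_of_mem h2)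
  have := hD b
  omega

lemma amo_nodup {D : Config B S} (hD : AtMostOnce D) (s : Fin S) : (D s).Nodup := by
  rw [List.nodup_iff_count_le_one]
  intro b
  have := hD b
  have h1 : (D s).count b ≤ ∑ x : Fin S, (D x).count b :=
    Finset.single_le_sum (f := fun x => (D x).count b) (fun _ _ => Nat.zero_le _)
      (Finset.mem_univ s)
  omega

lemma nodup_getElem?_inj {l : List (Fin B)} (h : l.Nodup) {x : Fin B} {m k : ℕ}
    (hm : l[m]? = some x) (hk : l[k]? = some x) : m = k := by
  obtain ⟨hm', hmx⟩ := List.getElem?_eq_some_iff.1 hm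
  obtain ⟨hk', hkx⟩ := List.getElem?_eq_some_iff.1 hk
  have hinj := List.nodup_iff_injective_get.1 h (a₁ := ⟨m, hm'⟩) (a₂ := ⟨k, hk'⟩)
  simp only [List.get_eq_getElem] at hinj
  have := hinj (by rw [hmx, hkx])
  exact congrArg Fin.val this

lemma mem_of_getElem?' {α : Type*} {l : List α} {x : α} {m : ℕ} (h : l[m]? = some x) : x ∈ l :=
  List.mem_iff_getElem?.2 ⟨m, h⟩

lemma mem_dropLast_of_ne {l : List (Fin B)} (hl : l ≠ []) {b : Fin B}
    (hb : b ∈ l) (hne : b ≠ l.getLast hl) : b ∈ l.dropLast := by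
  have heq := List.dropLast_append_getLast hl
  rw [← heq] at hb
  rcases List.mem_append.1 hb with h | h
  · exact h
  · simp at h; exact absurd h hne

lemma getElem?_dropLast_of_lt {α : Type*} {l : List α} {m : ℕ} (h : m < l.length - 1) :
    l.dropLast[m]? = l[m]? := by
  rw [List.getElem?_dropLast, if_pos h]

end LBN
namespace LBN
open List Classical

variable {B S : ℕ}

lemma applyMove_reloc_eq {D : Config B S} {src dst : Fin S}
    (hsrc : D src ≠ []) :
    applyMove D (.relocate src dst)
      = Function.update (Function.update D src (D src).dropLast) dst
        ((Function.update D src (D src).dropLast) dst ++ [(D src).getLast hsrc]) := by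
  have hg : (D src).getLast? = some ((D src).getLast hsrc) := List.getLast?_eq_getLast hsrc
  simp only [applyMove]
  rw [hg]

lemma applyMove_relocate {D : Config B S} {src dst : Fin S} (hne : src ≠ dst)
    (hsrc : D src ≠ []) :
    (applyMove D (.relocate src dst)) src = (D src).dropLast ∧
    (applyMove D (.relocate src dst)) dst = D dst ++ [(D src).getLast hsrc] ∧
    (∀ s, s ≠ src → s ≠ dst → (applyMove D (.relocate src dst)) s = D s) := by
  rw [applyMove_reloc_eq hsrc]
  refine ⟨?_, ?_, fun s h1 h2 => ?_⟩
  · rw [Function.update_of_ne hne, Function.update_self]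
  · rw [Function.update_self, Function.update_of_ne (Ne.symm hne)]
  · rw [Function.update_of_ne h2, Function.update_of_ne h1]

lemma sum_split2 {src dst : Fin S} (hne : src ≠ dst) (f : Fin S → ℕ) :
    ∑ x : Fin S, f x = f src + f dst + ∑ x ∈ Finset.univ \ {src, dst}, f x := by
  classical
  have h1 : (Finset.univ : Finset (Fin S)) = insert src (insert dst (Finset.univ \ {src, dst})) := by
    ext x; by_cases hx : x = src <;> by_cases hx' : x = dst <;> simp [hx, hx']
  conv_lhs => rw [h1]
  rw [Finset.sum_insert (by simp [hne]), Finset.sum_insert (by simp)]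
  omega

lemma sum_g_update2 (g : List (Fin B) → ℕ) (D : Config B S) {src dst : Fin S} (hne : src ≠ dst)
    (L1 L2 : List (Fin B)) :
    (∑ s : Fin S, g ((Function.update (Function.update D src L1) dst L2) s))
      + g (D src) + g (D dst)
    = (∑ s : Fin S, g (D s)) + g L1 + g L2 := by
  classical
  set gg := Function.update (Function.update D src L1) dst L2 with hg
  have hgsrc : g (gg src) = g L1 := by
    rw [hg, Function.update_of_ne hne, Function.update_self]
  have hgdst : g (gg dst) = g L2 := by rw [hg, Function.update_self]
  have hoff : ∀ s, s ≠ src → s ≠ dst → gg s = D s := fun s h1 h2 => by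
    rw [hg, Function.update_of_ne h2, Function.update_of_ne h1]
  rw [sum_split2 hne (fun s => g (gg s)), sum_split2 hne (fun s => g (D s))]
  have hcong : ∑ x ∈ Finset.univ \ {src, dst}, g (gg x)
      = ∑ x ∈ Finset.univ \ {src, dst}, g (D x) := by
    refine Finset.sum_congr rfl fun x hx => ?_
    simp only [Finset.mem_sdiff, Finset.mem_insert, Finset.mem_singleton] at hx
    rw [hoff x (fun h => hx.2 (Or.inl h)) (fun h => hx.2 (Or.inr h))]
  rw [hgsrc, hgdst, hcong]
  omega

lemma sum_g_update1 (g : List (Fin B) → ℕ) (D : Config B S) (u : Fin S) (L : List (Fin B)) :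
    (∑ s : Fin S, g ((Function.update D u L) s)) + g (D u)
    = (∑ s : Fin S, g (D s)) + g L := by
  classical
  set gg := Function.update D u L with hg
  have hgu : gg u = L := by rw [hg, Function.update_self]
  have hoff : ∀ s, s ≠ u → gg s = D s := fun s h1 => by rw [hg, Function.update_of_ne h1]
  have h1 : g (gg u) + ∑ s ∈ Finset.univ.erase u, g (gg s)
      = ∑ s : Fin S, g (gg s) :=
    Finset.add_sum_erase _ (fun s => g (gg s)) (Finset.mem_univ u)
  have h2 : g (D u) + ∑ s ∈ Finset.univ.erase u, g (D s)
      = ∑ s : Fin S, g (D s) :=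
    Finset.add_sum_erase _ (fun s => g (D s)) (Finset.mem_univ u)
  have hcong : ∑ s ∈ Finset.univ.erase u, g (gg s)
      = ∑ s ∈ Finset.univ.erase u, g (D s) := by
    refine Finset.sum_congr rfl fun x hx => ?_
    exact congrArg (fun l => g l) (hoff x (Finset.mem_erase.1 hx).1)
  rw [hgu] at h1
  omega

lemma count_dropLast_add {l : List (Fin B)} (hl : l ≠ []) (b : Fin B) :
    l.dropLast.count b + [l.getLast hl].count b = l.count b := by
  conv_rhs => rw [← List.dropLast_append_getLast hl]
  rw [List.count_append]

lemma amo_applyMove {D : Config B S} (hD : AtMostOnce D) (m : Move S) :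
    AtMostOnce (applyMove D m) := by
  intro b
  have hb := hD b
  cases m with
  | retrieve s =>
    have h1 := sum_g_update1 (fun l => l.count b) D s (D s).dropLast
    have h2 : (D s).dropLast.count b ≤ (D s).count b :=
      List.Sublist.count_le b (List.dropLast_sublist _)
    show (∑ s' : Fin S, ((Function.update D s (D s).dropLast) s').count b) ≤ 1
    omega
  | relocate src dst =>
    by_cases hsrc : D src = []
    · have : applyMove D (.relocate src dst) = D := by
        simp only [applyMove]; rw [hsrc]; rfl
      rw [this]; exact hb
    · rw [applyMove_reloc_eq hsrc]
      by_cases hne : src ≠ dst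
      · have hddst : (Function.update D src (D src).dropLast) dst = D dst :=
          Function.update_of_ne (Ne.symm hne) _ _
        rw [hddst]
        have h1 := sum_g_update2 (fun l => l.count b) D hne (D src).dropLast
          (D dst ++ [(D src).getLast hsrc])
        have h2 := count_dropLast_add hsrc b
        rw [List.count_append] at h1
        omega
      · push_neg at hne
        subst hne
        rw [Function.update_self, Function.update_idem]
        have h1 := sum_g_update1 (fun l => l.count b) D src
          ((D src).dropLast ++ [(D src).getLast hsrc])
        have h2 := count_dropLast_add hsrc b
        rw [List.count_append] at h1
        omega

lemma mem_applyMove {D : Config B S} {m : Move S} {b : Fin B} {s : Fin S}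
    (h : b ∈ (applyMove D m) s) : ∃ s', b ∈ D s' := by
  cases m with
  | retrieve u =>
    by_cases hsu : s = u
    · subst hsu
      rw [show applyMove D (.retrieve s) = Function.update D s (D s).dropLast from rfl,
        Function.update_self] at h
      exact ⟨s, (List.dropLast_sublist _).mem h⟩
    · rw [show applyMove D (.retrieve u) = Function.update D u (D u).dropLast from rfl,
        Function.update_of_ne hsu] at h
      exact ⟨s, h⟩
  | relocate src dst =>
    by_cases hsrc : D src = []
    · have : applyMove D (.relocate src dst) = D := by
        simp only [applyMove]; rw [hsrc]; rfl
      rw [this] at h; exact ⟨s, h⟩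
    · rw [applyMove_reloc_eq hsrc] at h
      by_cases hsd : s = dst
      · subst hsd
        rw [Function.update_self] at h
        rcases List.mem_append.1 h with h | h
        · by_cases hss : s = src
          · subst hss; rw [Function.update_self] at h
            exact ⟨s, (List.dropLast_sublist _).mem h⟩
          · rw [Function.update_of_ne hss] at h; exact ⟨s, h⟩
        · simp at h; subst h; exact ⟨src, List.getLast_mem hsrc⟩
      · rw [Function.update_of_ne hsd] at h
        by_cases hss : s = src
        · subst hss; rw [Function.update_self] at h
          exact ⟨s, (List.dropLast_sublist _).mem h⟩
        · rw [Function.update_of_ne hss] at h; exact ⟨s, h⟩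

lemma play_append (D : Config B S) (xs ys : List (Move S)) :
    play D (xs ++ ys) = play (play D xs) ys := by
  induction xs generalizing D with
  | nil => rfl
  | cons m xs ih => simp only [List.cons_append, play]; exact ih _

lemma allEnabled_append {D : Config B S} {xs ys : List (Move S)} :
    AllEnabled D (xs ++ ys) ↔ AllEnabled D xs ∧ AllEnabled (play D xs) ys := by
  induction xs generalizing D with
  | nil => simp [AllEnabled, play]
  | cons m xs ih =>
    simp only [List.cons_append, AllEnabled, play]
    rw [ih, and_assoc]

end LBN
namespace LBN
open List Classical

variable {B S : ℕ}

lemma countMoves_nil (P : Config B S → Move S → Prop) (D : Config B S) :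
    countMoves P D [] = 0 := rfl

lemma countMoves_cons (P : Config B S → Move S → Prop) (D : Config B S)
    (m : Move S) (ms : List (Move S)) :
    countMoves P D (m :: ms)
      = (@ite ℕ (P D m) (Classical.propDecidable _) 1 0) + countMoves P (applyMove D m) ms := rfl

lemma movedBlock_unique {D : Config B S} {m : Move S} {b b' : Fin B}
    (h : MovedBlock D m b) (h' : MovedBlock D m b') : b = b' := by
  obtain ⟨src, dst, rfl, -, hg⟩ := h
  obtain ⟨src', dst', heq, -, hg'⟩ := h'
  cases heq
  rw [hg] at hg'
  exact Option.some.inj hg'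

/-- Per-block relocation count. -/
noncomputable def cnt (b : Fin B) (D : Config B S) (ms : List (Move S)) : ℕ :=
  countMoves (fun D' m => MovedBlock D' m b) D ms

lemma countMoves_relocIn_eq_sum (D : Config B S) (ms : List (Move S)) :
    countMoves (RelocIn Set.univ) D ms = ∑ b : Fin B, cnt b D ms := by
  induction ms generalizing D with
  | nil => simp [countMoves_nil, cnt]
  | cons m ms ih =>
    rw [countMoves_cons]
    have hsum : ∑ b : Fin B, cnt b D (m :: ms)
        = (∑ b : Fin B, (@ite ℕ (MovedBlock D m b) (Classical.propDecidable _) 1 0))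
          + ∑ b : Fin B, cnt b (applyMove D m) ms := by
      rw [← Finset.sum_add_distrib]
      rfl
    rw [hsum, ih]
    congr 1
    by_cases h : RelocIn Set.univ D m
    · obtain ⟨b₀, -, hb₀⟩ := h
      rw [if_pos ⟨b₀, Set.mem_univ _, hb₀⟩]
      rw [Finset.sum_eq_single b₀ (fun b' _ hne =>
        if_neg (fun hb' => hne (movedBlock_unique hb' hb₀)))
        (fun h => absurd (Finset.mem_univ b₀) h), if_pos hb₀]
    · rw [if_neg h]
      symm
      refine Finset.sum_eq_zero fun b' _ => ?_
      rw [if_neg (fun hb' => h ⟨b', Set.mem_univ _, hb'⟩)]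

lemma cnt_cons_of_moved {b : Fin B} {D : Config B S} {m : Move S} (h : MovedBlock D m b)
    (ms : List (Move S)) : cnt b D (m :: ms) = 1 + cnt b (applyMove D m) ms := by
  rw [cnt, countMoves_cons, if_pos h]; rfl

lemma cnt_cons_of_not_moved {b : Fin B} {D : Config B S} {m : Move S} (h : ¬ MovedBlock D m b)
    (ms : List (Move S)) : cnt b D (m :: ms) = cnt b (applyMove D m) ms := by
  rw [cnt, countMoves_cons, if_neg h]
  exact Nat.zero_add _

/-- Key preservation lemma: a badly placed block stays badly placed under any
enabled move that does not relocate it. -/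
lemma badly_step {D : Config B S} {b : Fin B} (hbad : BadlyPlaced D b) {m : Move S}
    (hen : Enabled D m) (hnm : ¬ MovedBlock D m b) : BadlyPlaced (applyMove D m) b := by
  obtain ⟨s, a, hab, ii, jj, hij, ha, hb⟩ := hbad
  have hjlen : jj < (D s).length := (List.getElem?_eq_some_iff.1 hb).1
  cases m with
  | retrieve u =>
    obtain ⟨r, hr, hrmin⟩ := hen
    have hru : D u ≠ [] := by
      intro h; rw [h] at hr; simp at hr
    rw [List.getLast?_eq_getElem?] at hr
    by_cases hsu : s = u
    · subst hsu
      have hra : r ≤ a := hrmin s a (mem_of_getElem?' ha)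
      have hjne : jj ≠ (D s).length - 1 := by
        intro hkk
        rw [hkk] at hb
        have hrb : r = b := Option.some.inj (hr.symm.trans hb)
        rw [← hrb] at hab
        exact absurd hab (not_lt.2 hra)
      refine ⟨s, a, hab, ii, jj, hij, ?_, ?_⟩ <;>
        rw [show applyMove D (.retrieve s) = Function.update D s (D s).dropLast from rfl,
          Function.update_self, getElem?_dropLast_of_lt (by omega)]
      · exact ha
      · exact hb
    · refine ⟨s, a, hab, ii, jj, hij, ?_, ?_⟩ <;>
        rw [show applyMove D (.retrieve u) = Function.update D u (D u).dropLast from rfl,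
          Function.update_of_ne hsu]
      · exact ha
      · exact hb
  | relocate src dst =>
    obtain ⟨hne, hsrc⟩ := hen
    set c := (D src).getLast hsrc with hc
    have hcm : MovedBlock D (.relocate src dst) c :=
      ⟨src, dst, rfl, hne, List.getLast?_eq_getLast hsrc⟩
    have hbc : b ≠ c := fun h => hnm (h ▸ hcm)
    obtain ⟨h1, h2, h3⟩ := applyMove_relocate hne hsrc
    by_cases hss : s = src
    · subst hss
      have hjne : jj ≠ (D s).length - 1 := by
        intro hkk
        have hgl : (D s).getLast? = some b := by rw [List.getLast?_eq_getElem?, ← hkk, hb]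
        rw [List.getLast?_eq_getLast hsrc] at hgl
        exact hbc (Option.some.inj hgl).symm
      refine ⟨s, a, hab, ii, jj, hij, ?_, ?_⟩ <;>
        rw [h1, getElem?_dropLast_of_lt (by omega)]
      · exact ha
      · exact hb
    · by_cases hsd : s = dst
      · subst hsd
        have hilen : ii < (D s).length := (List.getElem?_eq_some_iff.1 ha).1
        refine ⟨s, a, hab, ii, jj, hij, ?_, ?_⟩ <;>
          rw [h2, List.getElem?_append, if_pos (by omega)]
        · exact ha
        · exact hb
      · refine ⟨s, a, hab, ii, jj, hij, ?_, ?_⟩ <;> rw [h3 s hss hsd]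
        · exact ha
        · exact hb

/-- A badly placed block must be relocated at least once in any feasible plan. -/
lemma badly_needs_reloc {ms : List (Move S)} {D : Config B S} {b : Fin B}
    (hen : AllEnabled D ms) (hend : ∀ s, play D ms s = [])
    (hbad : BadlyPlaced D b) (hcnt : cnt b D ms = 0) : False := by
  induction ms generalizing D with
  | nil =>
    obtain ⟨s, a, hab, ii, jj, hij, ha, hb⟩ := hbad
    have := hend s
    rw [show play D [] = D from rfl] at this
    rw [this] at hb
    simp at hb
  | cons m ms ih =>
    obtain ⟨henm, hen'⟩ := hen
    have hnm : ¬ MovedBlock D m b := by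
      intro h
      rw [cnt_cons_of_moved h] at hcnt
      omega
    rw [cnt_cons_of_not_moved hnm] at hcnt
    exact ih hen' (fun s => hend s) (badly_step hbad henm hnm) hcnt
end LBN
namespace LBN
open List Classical

variable {B S : ℕ}

lemma dig (s₁ s₂ : Fin S) (hne : s₁ ≠ s₂) :
    ∀ (q : ℕ) (D : Config B S), q ≤ (D s₁).length →
      AllEnabled D (List.replicate q (Move.relocate s₁ s₂)) ∧
      (play D (List.replicate q (Move.relocate s₁ s₂))) s₁ = (D s₁).take ((D s₁).length - q) ∧
      (∀ b s, b ∈ (play D (List.replicate q (Move.relocate s₁ s₂))) s → ∃ s', b ∈ D s') ∧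
      (∑ s : Fin S, ((play D (List.replicate q (Move.relocate s₁ s₂))) s).length)
        = ∑ s : Fin S, (D s).length := by
  intro q
  induction q with
  | zero =>
    intro D _
    exact ⟨trivial, by simp [play], fun b s hb => ⟨s, hb⟩, rfl⟩
  | succ q ih =>
    intro D hq
    have hsrc : D s₁ ≠ [] := by
      intro h; rw [h] at hq; simp at hq
    have hrep : List.replicate (q+1) (Move.relocate s₁ s₂)
        = Move.relocate s₁ s₂ :: List.replicate q (Move.relocate s₁ s₂) := rfl
    set D' := applyMove D (.relocate s₁ s₂) with hD'
    obtain ⟨h1, h2, h3⟩ := applyMove_relocate hne hsrc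
    have hlen' : (D' s₁).length = (D s₁).length - 1 := by
      rw [hD', h1, List.length_dropLast]
    have hq' : q ≤ (D' s₁).length := by omega
    obtain ⟨ihA, ihB, ihC, ihD⟩ := ih D' hq'
    rw [hrep]
    refine ⟨⟨⟨hne, hsrc⟩, ihA⟩, ?_, ?_, ?_⟩
    · show (play D' _) s₁ = _
      rw [ihB]
      have : (D' s₁).take ((D' s₁).length - q) = (D s₁).take ((D s₁).length - (q+1)) := by
        rw [hlen', hD', h1, List.dropLast_eq_take, List.take_take]
        congr 1
        omega
      exact this
    · intro b s hb
      show ∃ s', b ∈ D s'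
      obtain ⟨s', hs'⟩ := ihC b s hb
      exact mem_applyMove hs'
    · show (∑ s : Fin S, ((play D' _) s).length) = _
      rw [ihD]
      rw [hD', applyMove_reloc_eq hsrc,
        Function.update_of_ne (Ne.symm hne) (D s₁).dropLast D]
      have e1 := sum_g_update2 (fun l => l.length) D hne (D s₁).dropLast
        (D s₂ ++ [(D s₁).getLast hsrc])
      simp only [List.length_append, List.length_dropLast, List.length_cons,
        List.length_nil] at e1 ⊢
      have hpos : 0 < (D s₁).length := List.length_pos_iff.2 hsrc
      omega

end LBN
namespace LBN
open List Classical

variable {B S : ℕ}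

lemma exists_feasible (hS : 2 ≤ S) :
    ∀ (n : ℕ) (D : Config B S), (∑ s : Fin S, (D s).length) = n → ∃ ms, Feasible D ms := by
  intro n
  induction n with
  | zero =>
    intro D hD
    refine ⟨[], trivial, fun s => ?_⟩
    show D s = []
    rw [← List.length_eq_zero_iff]
    have : (D s).length ≤ ∑ s' : Fin S, (D s').length :=
      Finset.single_le_sum (f := fun s' => (D s').length)
        (fun _ _ => Nat.zero_le _) (Finset.mem_univ s)
    omega
  | succ n ih =>
    intro D hD
    classical
    have hne : ∃ s, D s ≠ [] := by
      by_contra h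
      push_neg at h
      have : (∑ s : Fin S, (D s).length) = 0 :=
        Finset.sum_eq_zero (fun s _ => by rw [h s]; rfl)
      omega
    obtain ⟨s₀, hs₀⟩ := hne
    obtain ⟨b₀, hb₀⟩ := List.exists_mem_of_ne_nil _ hs₀
    set F : Finset (Fin B) := Finset.univ.filter (fun b => ∃ s, b ∈ D s) with hF
    have hFne : F.Nonempty := ⟨b₀, by simp [hF]; exact ⟨s₀, hb₀⟩⟩
    set r := F.min' hFne with hr
    have hmin : ∀ b', (∃ s, b' ∈ D s) → r ≤ b' := fun b' hb' =>
      F.min'_le b' (by simp [hF]; exact hb')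
    obtain ⟨s₁, hrs₁⟩ : ∃ s, r ∈ D s := by
      have hm := F.min'_mem hFne
      exact (Finset.mem_filter.1 hm).2
    obtain ⟨p, hpq⟩ := List.mem_iff_getElem?.1 hrs₁
    have hp : p < (D s₁).length := (List.getElem?_eq_some_iff.1 hpq).1
    obtain ⟨s₂, hs₂⟩ : ∃ s₂, s₁ ≠ s₂ := by
      have h0 : (0 : ℕ) < S := by omega
      have h1 : (1 : ℕ) < S := by omega
      by_cases he : s₁ = ⟨0, h0⟩
      · exact ⟨⟨1, h1⟩, by rw [he]; intro hc; exact absurd (congrArg Fin.val hc) (by simp)⟩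
      · exact ⟨⟨0, h0⟩, fun hc => he hc⟩
    set q := (D s₁).length - (p + 1) with hq
    obtain ⟨hA, hB, hC, hD2⟩ := dig s₁ s₂ hs₂ q D (by omega)
    set D₁ := play D (List.replicate q (Move.relocate s₁ s₂)) with hD₁
    have hD₁s : D₁ s₁ = (D s₁).take (p + 1) := by
      rw [hB]
      congr 1
      omega
    have hgl : (D₁ s₁).getLast? = some r := by
      rw [List.getLast?_eq_getElem?, hD₁s, List.length_take]
      have hlen : (p + 1) ⊓ (D s₁).length = p + 1 := by omega
      rw [hlen, List.getElem?_take, if_pos (by omega)]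
      simpa using hpq
    have hen : Enabled D₁ (.retrieve s₁) :=
      ⟨r, hgl, fun s' b' hb' => hmin b' (hC b' s' hb')⟩
    set D₂ := applyMove D₁ (.retrieve s₁) with hD₂
    have hlen₂ : (∑ s : Fin S, (D₂ s).length) = n := by
      have e1 := sum_g_update1 (fun l => l.length) D₁ s₁ (D₁ s₁).dropLast
      simp only [List.length_dropLast] at e1
      have hl1 : (D₁ s₁).length = p + 1 := by
        rw [hD₁s, List.length_take]; omega
      have hDD : D₂ = Function.update D₁ s₁ (D₁ s₁).dropLast := rfl
      rw [hDD]
      rw [hD] at hD2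
      omega
    obtain ⟨ms₂, hms₂A, hms₂E⟩ := ih D₂ hlen₂
    refine ⟨List.replicate q (Move.relocate s₁ s₂) ++ (Move.retrieve s₁ :: ms₂), ?_, ?_⟩
    · rw [allEnabled_append]
      exact ⟨hA, hen, hms₂A⟩
    · intro s
      rw [play_append]
      exact hms₂E s

end LBN
namespace LBN
open List Classical

variable {B S : ℕ}

lemma pushAll_eq (ps : List (Fin B × Fin S)) :
    ∀ (base : Config B S) (s : Fin S),
      pushAll base ps s = base s ++ (ps.filter (fun p => p.2 = s)).map Prod.fst := by
  induction ps with
  | nil => intro base s; simp [pushAll]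
  | cons p rest ih =>
    intro base s
    show pushAll (Function.update base p.2 (base p.2 ++ [p.1])) rest s = _
    rw [ih]
    by_cases h : p.2 = s
    · subst h
      rw [Function.update_self, List.filter_cons_of_pos (by simp), List.map_cons,
        List.append_assoc]
      rfl
    · rw [Function.update_of_ne (Ne.symm h), List.filter_cons_of_neg (by simpa using h)]

lemma OL1 {Z : List (Fin B × Fin S)} {d : Fin S} {q : ℕ} {b : Fin B}
    (h : ((Z.filter (fun p => p.2 = d)).map Prod.fst)[q]? = some b) :
    ∃ j : ℕ, Z[j]? = some (b, d) := by
  have hmem : b ∈ (Z.filter (fun p => p.2 = d)).map Prod.fst := List.mem_iff_getElem?.2 ⟨q, h⟩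
  obtain ⟨p, hp, hpb⟩ := List.mem_map.1 hmem
  obtain ⟨hpZ, hpd⟩ := List.mem_filter.1 hp
  have hpd' : p.2 = d := by simpa using hpd
  have : p = (b, d) := Prod.ext hpb hpd'
  subst this
  exact List.mem_iff_getElem?.1 hpZ

lemma OL {d : Fin S} :
    ∀ (Z : List (Fin B × Fin S)) {q' q : ℕ} {a b : Fin B}, q' < q →
      ((Z.filter (fun p => p.2 = d)).map Prod.fst)[q']? = some a →
      ((Z.filter (fun p => p.2 = d)).map Prod.fst)[q]? = some b →
      ∃ j' j : ℕ, j' < j ∧ Z[j']? = some (a, d) ∧ Z[j]? = some (b, d) := by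
  intro Z
  induction Z with
  | nil => intro q' q a b _ h1 _; simp at h1
  | cons z Z' ih =>
    intro q' q a b hlt h1 h2
    by_cases hz : z.2 = d
    · rw [List.filter_cons_of_pos (by simp [hz]), List.map_cons] at h1 h2
      match q', q, hlt with
      | 0, q''+1, _ =>
        rw [List.getElem?_cons_zero] at h1
        rw [List.getElem?_cons_succ] at h2
        have ha : z.1 = a := Option.some.inj h1
        obtain ⟨j, hj⟩ := OL1 h2
        refine ⟨0, j + 1, Nat.succ_pos j, ?_, ?_⟩
        · rw [List.getElem?_cons_zero, ← ha, ← hz]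
        · rw [List.getElem?_cons_succ]; exact hj
      | q''+1, qq+1, hlt =>
        rw [List.getElem?_cons_succ] at h1 h2
        obtain ⟨j', j, hjj, hj1, hj2⟩ := ih (by omega) h1 h2
        exact ⟨j' + 1, j + 1, by omega, by rw [List.getElem?_cons_succ]; exact hj1,
          by rw [List.getElem?_cons_succ]; exact hj2⟩
    · rw [List.filter_cons_of_neg (by simpa using hz)] at h1 h2
      obtain ⟨j', j, hjj, hj1, hj2⟩ := ih hlt h1 h2
      exact ⟨j' + 1, j + 1, by omega, by rw [List.getElem?_cons_succ]; exact hj1,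
        by rw [List.getElem?_cons_succ]; exact hj2⟩

lemma zip_getElem?_some {A : List (Fin B)} {ds : List (Fin S)} {j : ℕ}
    (hj : j < A.length) (hj' : j < ds.length) :
    (A.zip ds)[j]? = some (A[j], ds[j]) := by
  have hlen : j < (A.zip ds).length := by rw [List.length_zip]; omega
  rw [List.getElem?_eq_getElem hlen, List.getElem_zip]

lemma zip_getElem?_decomp {A : List (Fin B)} {ds : List (Fin S)} {j : ℕ}
    {p : Fin B × Fin S} (h : (A.zip ds)[j]? = some p) :
    A[j]? = some p.1 ∧ ds[j]? = some p.2 := by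
  obtain ⟨hlt, hp⟩ := List.getElem?_eq_some_iff.1 h
  have hlen := hlt
  rw [List.length_zip] at hlen
  have hA : j < A.length := by omega
  have hd : j < ds.length := by omega
  rw [List.getElem_zip] at hp
  constructor
  · rw [List.getElem?_eq_getElem hA, ← congrArg Prod.fst hp]
  · rw [List.getElem?_eq_getElem hd, ← congrArg Prod.snd hp]

lemma sum_count_filters (Z : List (Fin B × Fin S)) (b : Fin B) :
    (∑ s : Fin S, (((Z.filter (fun p => p.2 = s)).map Prod.fst).count b))
      = (Z.map Prod.fst).count b := by
  classical
  induction Z with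
  | nil => simp
  | cons z Z' ih =>
    have hstep : ∀ s : Fin S, ((List.filter (fun p => p.2 = s) (z :: Z')).map Prod.fst).count b
        = (if z.2 = s then (if z.1 = b then 1 else 0) else 0)
          + ((List.filter (fun p => p.2 = s) Z').map Prod.fst).count b := by
      intro s
      by_cases h : z.2 = s
      · rw [List.filter_cons_of_pos (by simp [h]), List.map_cons, List.count_cons, if_pos h]
        simp only [beq_iff_eq]
        omega
      · rw [List.filter_cons_of_neg (by simpa using h), if_neg h, Nat.zero_add]
    calc (∑ s : Fin S, ((List.filter (fun p => p.2 = s) (z :: Z')).map Prod.fst).count b)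
        = ∑ s : Fin S, ((if z.2 = s then (if z.1 = b then 1 else 0) else 0)
            + ((List.filter (fun p => p.2 = s) Z').map Prod.fst).count b) :=
          Finset.sum_congr rfl (fun s _ => hstep s)
      _ = (∑ s : Fin S, (if z.2 = s then (if z.1 = b then 1 else 0) else 0))
            + ∑ s : Fin S, ((List.filter (fun p => p.2 = s) Z').map Prod.fst).count b :=
          Finset.sum_add_distrib
      _ = (if z.1 = b then 1 else 0) + (Z'.map Prod.fst).count b := by
          rw [ih]
          congr 1
          rw [Finset.sum_ite_eq (Finset.univ) z.2 (fun _ => if z.1 = b then 1 else 0)]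
          simp
      _ = ((z :: Z').map Prod.fst).count b := by
          rw [List.map_cons, List.count_cons]
          simp only [beq_iff_eq]
          omega

end LBN
namespace LBN
open List Classical

variable {B S : ℕ}

lemma final_contradiction (C : Config B S) (hC : IsConfig C) (sStar : Fin S) (i : ℕ)
    (h4 : P4Cond C sStar i) (ds : List (Fin S))
    (hlen : ds.length = (aboveList C sStar i).length)
    (hne : ∀ d ∈ ds, d ≠ sStar)
    (H1 : ∀ (j : ℕ) (d : Fin S) (bj : Fin B), ds[j]? = some d →
      (aboveList C sStar i)[j]? = some bj → ∀ a ∈ C d, ¬ a < bj)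
    (H2 : ∀ (j' j : ℕ) (a bj : Fin B), j' < j → ds[j']? = ds[j]? →
      (aboveList C sStar i)[j']? = some a → (aboveList C sStar i)[j]? = some bj →
      ¬ a < bj) : False := by
  classical
  set A := aboveList C sStar i with hA
  set Z := A.zip ds with hZ
  set base := Function.update C sStar ((C sStar).take (i + 1)) with hbase
  set exp := expResult C sStar i ds with hexp0
  have hexpentry : ∀ s, exp s = base s ++ (Z.filter (fun p => p.2 = s)).map Prod.fst := by
    intro s
    rw [hexp0, expResult, pushAll_eq]
  -- count of each block in exp over all stacks is 1
  have hcount : ∀ b : Fin B, (∑ s : Fin S, (exp s).count b) = 1 := by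
    intro b
    have e1 : ∀ s, (exp s).count b
        = (base s).count b + (((Z.filter (fun p => p.2 = s)).map Prod.fst).count b) := by
      intro s; rw [hexpentry s, List.count_append]
    have e2 : (∑ s : Fin S, (exp s).count b)
        = (∑ s : Fin S, (base s).count b)
          + ∑ s : Fin S, (((Z.filter (fun p => p.2 = s)).map Prod.fst).count b) := by
      rw [← Finset.sum_add_distrib]
      exact Finset.sum_congr rfl (fun s _ => e1 s)
    have e3 := sum_count_filters Z b
    have e4 : Z.map Prod.fst = A := List.map_fst_zip (le_of_eq hlen.symm)
    have e5 : A.count b = ((C sStar).drop (i+1)).count b := by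
      rw [hA, aboveList, List.count_reverse]
    have e6 := sum_g_update1 (fun l => l.count b) C sStar ((C sStar).take (i+1))
    have e7 : ((C sStar).take (i+1)).count b + ((C sStar).drop (i+1)).count b
        = (C sStar).count b := by
      rw [← List.count_append, List.take_append_drop]
    have e8 := hC b
    rw [e2, e3, e4, e5]
    rw [hbase]
    omega
  obtain ⟨b, hbA, hbbad⟩ := h4 ds hlen hne
  rw [← hA] at hbA
  rw [← hexp0] at hbbad
  -- index of b in A
  obtain ⟨jb, hjb⟩ := List.mem_iff_getElem?.1 hbA
  have hjbA : jb < A.length := (List.getElem?_eq_some_iff.1 hjb).1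
  have hjbds : jb < ds.length := by omega
  set d := ds[jb] with hd
  have hdjb : ds[jb]? = some d := List.getElem?_eq_getElem hjbds
  have hdne : d ≠ sStar := hne d (List.getElem_mem hjbds)
  have hAeq : A[jb] = b := by
    rw [List.getElem?_eq_getElem hjbA] at hjb
    exact Option.some.inj hjb
  have hZjb : Z[jb]? = some (b, d) := by
    rw [hZ, zip_getElem?_some hjbA hjbds, hAeq, ← hd]
  set M : Fin S → List (Fin B) := fun s => (Z.filter (fun p => p.2 = s)).map Prod.fst with hM
  have hbM : b ∈ M d := by
    refine List.mem_map.2 ⟨(b, d), List.mem_filter.2 ⟨mem_of_getElem?' hZjb, by simp⟩, rfl⟩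
  have hbexp : exp d = C d ++ M d := by
    rw [hexpentry d, hbase, Function.update_of_ne hdne]
  -- unpack badly placed
  obtain ⟨s, a, hab, ii, jj, hij, ha, hbj⟩ := hbbad
  have hsd : s = d := by
    by_contra hsd
    have h1 : b ∈ exp s := mem_of_getElem?' hbj
    have h2 : b ∈ exp d := by rw [hbexp]; exact List.mem_append.2 (Or.inr hbM)
    have := two_le_sum (fun x => (exp x).count b) hsd
      (count_pos_of_mem h1) (count_pos_of_mem h2)
    rw [hcount b] at this
    omega
  subst hsd
  rw [hbexp] at ha hbj
  have hbnotC : (C d).count b = 0 := by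
    have h1 : (exp d).count b ≤ 1 := by
      have := Finset.single_le_sum (f := fun x => (exp x).count b)
        (fun _ _ => Nat.zero_le _) (Finset.mem_univ d)
      rw [hcount b] at this
      exact this
    rw [hbexp, List.count_append] at h1
    have h2 : 1 ≤ (M d).count b := count_pos_of_mem hbM
    omega
  have hjjge : (C d).length ≤ jj := by
    by_contra hlt
    push_neg at hlt
    rw [List.getElem?_append, if_pos hlt] at hbj
    have : b ∈ C d := mem_of_getElem?' hbj
    have := count_pos_of_mem this
    omega
  rw [List.getElem?_append, if_neg (by omega)] at hbj
  by_cases hii : ii < (C d).length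
  · rw [List.getElem?_append, if_pos hii] at ha
    exact H1 jb d b hdjb hjb a (mem_of_getElem?' ha) hab
  · push_neg at hii
    rw [List.getElem?_append, if_neg (by omega)] at ha
    obtain ⟨j', j, hj'j, hZj', hZj⟩ := OL Z (show ii - (C d).length < jj - (C d).length by omega) ha hbj
    obtain ⟨hAj, hdj⟩ := zip_getElem?_decomp hZj
    obtain ⟨hAj', hdj'⟩ := zip_getElem?_decomp hZj'
    -- j = jb by nodup of A
    have hnodup : A.Nodup := by
      rw [List.nodup_iff_count_le_one]
      intro x
      have e5 : A.count x = ((C sStar).drop (i+1)).count x := by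
        rw [hA, aboveList, List.count_reverse]
      have e7 : ((C sStar).drop (i+1)).count x ≤ (C sStar).count x := by
        conv_rhs => rw [← List.take_append_drop (i+1) (C sStar)]
        rw [List.count_append]
        omega
      have e8 : (C sStar).count x ≤ ∑ s : Fin S, (C s).count x :=
        Finset.single_le_sum (f := fun s => (C s).count x)
          (fun _ _ => Nat.zero_le _) (Finset.mem_univ sStar)
      have := hC x
      omega
    have hjjb : j = jb := nodup_getElem?_inj hnodup hAj hjb
    subst hjjb
    exact H2 j' j a b hj'j (by rw [hdj', hdj]) hAj' hAj hab

end LBN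
namespace LBN
open List Classical

variable {B S : ℕ}

lemma big (C : Config B S) (hC : IsConfig C) (sStar : Fin S) (i : ℕ) (t : Fin B)
    (ht : ∀ b, t ≤ b) (hloc : (C sStar)[i]? = some t) (h4 : P4Cond C sStar i) :
    ∀ (rest : List (Move S)) (D : Config B S) (ds : List (Fin S)),
    ds.length ≤ (aboveList C sStar i).length →
    AllEnabled D rest → (∀ s, play D rest s = []) →
    AtMostOnce D →
    D sStar = (C sStar).take ((C sStar).length - ds.length) →
    (∀ z, ¬ BadlyPlaced C z → ∀ s, s ≠ sStar → z ∈ C s → z ∈ D s) →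
    (∀ (j : ℕ) (d : Fin S) (bj : Fin B), ds[j]? = some d →
      (aboveList C sStar i)[j]? = some bj → bj ∈ D d) →
    (∀ b, cnt b D rest ≤ 1) →
    (∀ b, ¬ BadlyPlaced C b → cnt b D rest = 0) →
    (∀ (j : ℕ) (bj : Fin B), j < ds.length → (aboveList C sStar i)[j]? = some bj →
      cnt bj D rest = 0) →
    (∀ d ∈ ds, d ≠ sStar) →
    (∀ (j : ℕ) (d : Fin S) (bj : Fin B), ds[j]? = some d →
      (aboveList C sStar i)[j]? = some bj → ∀ a ∈ C d, ¬ a < bj) →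
    (∀ (j' j : ℕ) (a bj : Fin B) (d : Fin S), j' < j → ds[j']? = some d → ds[j]? = some d →
      (aboveList C sStar i)[j']? = some a → (aboveList C sStar i)[j]? = some bj → ¬ a < bj) →
    False := by
  classical
  set A := aboveList C sStar i with hA
  set n := (C sStar).length with hn
  set K := A.length with hKdef
  have hi : i < n := (List.getElem?_eq_some_iff.1 hloc).1
  have hK : i + 1 + K = n := by
    rw [hKdef, hA, aboveList, List.length_reverse, List.length_drop]
    omega
  have amoC : AtMostOnce C := fun b => le_of_eq (hC b)
  have hAget : ∀ (j : ℕ), j < K → A[j]? = (C sStar)[n - 1 - j]? := by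
    intro j hj
    have hlen : (((C sStar).drop (i+1)).length) = K := by
      rw [List.length_drop]; omega
    have h1 : A[j]? = ((C sStar).drop (i+1))[K - 1 - j]? := by
      rw [hA, aboveList, List.getElem?_reverse (by rw [hlen]; exact hj), hlen]
    rw [h1, List.getElem?_drop]
    congr 1
    omega
  have hAbad : ∀ (j : ℕ) (bj : Fin B), A[j]? = some bj →
      t < bj ∧ BadlyPlaced C bj := by
    intro j bj hbj
    have hj : j < K := by
      have := (List.getElem?_eq_some_iff.1 hbj).1
      omega
    have he : (C sStar)[n - 1 - j]? = some bj := by rw [← hAget j hj]; exact hbj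
    have hie : i < n - 1 - j := by omega
    have hbt : bj ≠ t := by
      intro hbt
      subst hbt
      have := nodup_getElem?_inj (amo_nodup amoC sStar) hloc he
      omega
    have htb : t < bj := lt_of_le_of_ne (ht bj) (Ne.symm hbt)
    exact ⟨htb, sStar, t, htb, i, n - 1 - j, hie, hloc, he⟩
  intro rest
  induction rest with
  | nil =>
    intro D ds hk _ hend _ hDs _ _ _ _ _ _ _ _
    have h0 := hend sStar
    rw [show play D [] = D from rfl] at h0
    rw [hDs] at h0
    have : ((C sStar).take (n - ds.length)).length = 0 := by rw [h0]; rfl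
    rw [List.length_take] at this
    omega
  | cons m rest' ih =>
    intro D ds hk hen hend hamo hDs hWP hI5 hcnt1 hcntWP hcntP hne H1 H2
    by_cases hkK : ds.length = K
    · exact final_contradiction C hC sStar i h4 ds (by rw [← hA, ← hKdef]; exact hkK) hne
        (fun j d bj h1 h2 => H1 j d bj h1 h2)
        (fun j' j a bj hjj hdd h1 h2 => by
          have hj : j < ds.length := by
            by_contra hj
            push_neg at hj
            have h2' : j < A.length := (List.getElem?_eq_some_iff.1 h2).1
            rw [← hKdef] at h2'
            omega
          have hj' : j' < ds.length := by omega
          obtain ⟨d, hd⟩ : ∃ d, ds[j]? = some d := ⟨ds[j], List.getElem?_eq_getElem hj⟩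
          exact H2 j' j a bj d hjj (by rw [← hdd] at hd; exact hd) hd h1 h2)
    · have hkK' : ds.length < K := lt_of_le_of_ne hk hkK
      have hnk : i + 1 < n - ds.length := by omega
      have hlenDs : (D sStar).length = n - ds.length := by
        rw [hDs, List.length_take]; omega
      have htD : (D sStar)[i]? = some t := by
        rw [hDs, List.getElem?_take, if_pos (by omega)]
        exact hloc
      have htmem : t ∈ D sStar := mem_of_getElem?' htD
      obtain ⟨hEm, hE'⟩ := hen
      have hend' : ∀ s, play (applyMove D m) rest' s = [] := fun s => hend s
      cases m with
      | retrieve u =>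
        obtain ⟨r, hr, hrmin⟩ := hEm
        have hrt : r = t := le_antisymm (hrmin sStar t htmem) (ht r)
        subst hrt
        by_cases huS : u = sStar
        · subst huS
          rw [List.getLast?_eq_getElem?] at hr
          have := nodup_getElem?_inj (amo_nodup hamo u) htD hr
          omega
        · have htu : r ∈ D u := by
            rw [List.getLast?_eq_getElem?] at hr
            exact mem_of_getElem?' hr
          exact huS (amo_unique_stack hamo htu htmem)
      | relocate src dst =>
        obtain ⟨hsd, hsrc⟩ := hEm
        set c := (D src).getLast hsrc with hc
        have hcq : (D src).getLast? = some c := List.getLast?_eq_getLast hsrc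
        have hcM : MovedBlock D (.relocate src dst) c := ⟨src, dst, rfl, hsd, hcq⟩
        have hcmem : c ∈ D src := List.getLast_mem hsrc
        have hcnt'c : cnt c (applyMove D (.relocate src dst)) rest' = 0 := by
          have := hcnt1 c
          rw [cnt_cons_of_moved hcM] at this
          omega
        have hcntEq : ∀ b, b ≠ c →
            cnt b (applyMove D (.relocate src dst)) rest'
              = cnt b D (Move.relocate src dst :: rest') := by
          intro b hb
          rw [cnt_cons_of_not_moved (fun h => hb (movedBlock_unique h hcM))]
        have hcbad : BadlyPlaced C c := by
          by_contra hwp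
          have := hcntWP c hwp
          rw [cnt_cons_of_moved hcM] at this
          omega
        obtain ⟨hA1, hA2, hA3⟩ := applyMove_relocate hsd hsrc
        have hamo' := amo_applyMove hamo (.relocate src dst)
        by_cases hdstS : dst = sStar
        · have hA2' : applyMove D (.relocate src dst) sStar = D sStar ++ [c] := by
            rw [← hdstS]; exact hA2
          have hct : c ≠ t := by
            intro hct
            rw [hct] at hcmem
            have h9 : src = sStar := amo_unique_stack hamo hcmem htmem
            exact hsd (h9.trans hdstS.symm)
          have htc : t < c := lt_of_le_of_ne (ht c) (Ne.symm hct)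
          have hilen : i < (D sStar).length := by rw [hlenDs]; omega
          have hbad' : BadlyPlaced (applyMove D (.relocate src dst)) c := by
            refine ⟨sStar, t, htc, i, (D sStar).length, by omega, ?_, ?_⟩
            · rw [hA2', List.getElem?_append, if_pos (by omega)]
              exact htD
            · rw [hA2', List.getElem?_append, if_neg (lt_irrefl _), Nat.sub_self,
                List.getElem?_cons_zero]
          exact badly_needs_reloc hE' hend' hbad' hcnt'c
        · by_cases hsrcS : src = sStar
          · have hA1' : applyMove D (.relocate src dst) sStar = (D sStar).dropLast := by
              rw [← hsrcS]; exact hA1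
            have hcq' : (D sStar).getLast? = some c := by rw [← hsrcS]; exact hcq
            have hcmem' : c ∈ D sStar := by rw [← hsrcS]; exact hcmem
            -- the moved block is A[ds.length]
            have hcA : A[ds.length]? = some c := by
              rw [hAget ds.length hkK']
              have h1 : (D sStar)[(D sStar).length - 1]? = some c := by
                rw [← List.getLast?_eq_getElem?]; exact hcq'
              rw [hlenDs, hDs, List.getElem?_take, if_pos (by omega)] at h1
              rw [show n - 1 - ds.length = n - ds.length - 1 by omega]
              exact h1
            by_cases hbadc : ∃ a ∈ D dst, a < c
            · obtain ⟨a, haD, hac⟩ := hbadc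
              obtain ⟨ia, hia⟩ := List.mem_iff_getElem?.1 haD
              have hialt : ia < (D dst).length := (List.getElem?_eq_some_iff.1 hia).1
              have hbad' : BadlyPlaced (applyMove D (.relocate src dst)) c := by
                refine ⟨dst, a, hac, ia, (D dst).length, by omega, ?_, ?_⟩
                · rw [hA2, List.getElem?_append, if_pos (by omega)]
                  exact hia
                · rw [hA2, List.getElem?_append, if_neg (lt_irrefl _), Nat.sub_self,
                    List.getElem?_cons_zero]
              exact badly_needs_reloc hE' hend' hbad' hcnt'c
            · push_neg at hbadc
              -- recurse with ds ++ [dst]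
              have hlds : (ds ++ [dst]).length = ds.length + 1 := by
                rw [List.length_append, List.length_cons, List.length_nil]
              have hgetlt : ∀ (j : ℕ) (d : Fin S), (ds ++ [dst])[j]? = some d →
                  (j < ds.length ∧ ds[j]? = some d) ∨ (j = ds.length ∧ d = dst) := by
                intro j d hget
                have hjlt : j < ds.length + 1 := by
                  have := (List.getElem?_eq_some_iff.1 hget).1
                  rw [hlds] at this
                  exact this
                by_cases hjd : j < ds.length
                · left
                  refine ⟨hjd, ?_⟩
                  rw [List.getElem?_append, if_pos hjd] at hget
                  exact hget
                · right
                  have hje : j = ds.length := by omega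
                  subst hje
                  rw [List.getElem?_append, if_neg (lt_irrefl _), Nat.sub_self,
                    List.getElem?_cons_zero] at hget
                  exact ⟨rfl, (Option.some.inj hget).symm⟩
              refine ih (applyMove D (.relocate src dst)) (ds ++ [dst])
                (by rw [hlds]; omega) hE' hend' hamo' ?_ ?_ ?_ ?_ ?_ ?_ ?_ ?_ ?_
              · -- sStar stack
                rw [hA1', hDs, List.dropLast_eq_take, List.length_take, List.take_take, hlds]
                congr 1
                omega
              · -- well-placed blocks stay
                intro z hz s hsS hzC
                by_cases hsx : s = dst
                · rw [hsx, hA2]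
                  exact List.mem_append.2 (Or.inl (by rw [← hsx]; exact hWP z hz s hsS hzC))
                · rw [hA3 s (fun h => hsS (h.trans hsrcS)) hsx]
                  exact hWP z hz s hsS hzC
              · -- processed blocks stay in their stacks
                intro j d bj hget hAj
                rcases hgetlt j d hget with ⟨hjd, hds⟩ | ⟨hje, hde⟩
                · have hmem := hI5 j d bj hds hAj
                  by_cases hddst : d = dst
                  · rw [hddst, hA2]
                    exact List.mem_append.2 (Or.inl (by rw [← hddst]; exact hmem))
                  · rw [hA3 d (fun h => hne d (mem_of_getElem?' hds) (h.trans hsrcS)) hddst]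
                    exact hmem
                · subst hje
                  rw [hcA] at hAj
                  have hbjc : bj = c := (Option.some.inj hAj).symm
                  rw [hbjc, hde, hA2]
                  exact List.mem_append.2 (Or.inr (by simp [hc]))
              · -- cnt ≤ 1
                intro b
                by_cases hbc : b = c
                · subst hbc; rw [hcnt'c]; omega
                · rw [hcntEq b hbc]; exact hcnt1 b
              · -- wp cnt = 0
                intro b hb
                have hbc : b ≠ c := fun h => hb (h ▸ hcbad)
                rw [hcntEq b hbc]
                exact hcntWP b hb
              · -- processed cnt = 0
                intro j bj hj hAj
                by_cases hbc : bj = c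
                · subst hbc; exact hcnt'c
                · have hjlt : j < ds.length := by
                    rcases Nat.lt_succ_iff_lt_or_eq.1 (by rw [hlds] at hj; exact hj) with h | h
                    · exact h
                    · exfalso; subst h; rw [hcA] at hAj; exact hbc (Option.some.inj hAj).symm
                  rw [hcntEq bj hbc]
                  exact hcntP j bj hjlt hAj
              · -- new dests avoid sStar
                intro d hd
                rcases List.mem_append.1 hd with h | h
                · exact hne d h
                · simp at h; subst h; exact hdstS
              · -- H1
                intro j d bj hget hAj
                rcases hgetlt j d hget with ⟨hjd, hds⟩ | ⟨hje, hde⟩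
                · exact H1 j d bj hds hAj
                · subst hje
                  rw [hcA] at hAj
                  have hbjc : bj = c := (Option.some.inj hAj).symm
                  rw [hbjc]
                  intro a haC hac
                  -- minimum of C d is well placed and still present in D d
                  have hCdne : C d ≠ [] := fun h => by rw [h] at haC; exact absurd haC (by simp)
                  have hFne : (C d).toFinset.Nonempty := ⟨a, List.mem_toFinset.2 haC⟩
                  set z := (C d).toFinset.min' hFne with hz
                  have hzC : z ∈ C d := List.mem_toFinset.1 ((C d).toFinset.min'_mem hFne)
                  have hzmin : ∀ y ∈ C d, z ≤ y := fun y hy =>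
                    (C d).toFinset.min'_le y (List.mem_toFinset.2 hy)
                  have hzwp : ¬ BadlyPlaced C z := by
                    rintro ⟨s', a', ha'z, i1, j1, hij1, h1, h2⟩
                    have hzs' : z ∈ C s' := mem_of_getElem?' h2
                    have hs'd : s' = d := amo_unique_stack amoC hzs' hzC
                    subst hs'd
                    exact absurd ha'z (not_lt.2 (hzmin a' (mem_of_getElem?' h1)))
                  have hzD : z ∈ D d := hWP z hzwp d (fun hh => hdstS (hde.symm.trans hh)) hzC
                  rw [hde] at hzD
                  exact absurd (lt_of_le_of_lt (hzmin a haC) hac) (not_lt.2 (hbadc z hzD))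
              · -- H2
                intro j' j a bj d hj'j hget' hget hAj' hAj
                rcases hgetlt j d hget with ⟨hjd, hds⟩ | ⟨hje, hde⟩
                · rcases hgetlt j' d hget' with ⟨hjd', hds'⟩ | ⟨hje', _⟩
                  · exact H2 j' j a bj d hj'j hds' hds hAj' hAj
                  · omega
                · subst hje
                  rw [hcA] at hAj
                  have hbjc : bj = c := (Option.some.inj hAj).symm
                  rw [hbjc]
                  rcases hgetlt j' d hget' with ⟨hjd', hds'⟩ | ⟨hje', _⟩
                  · have hmem := hI5 j' d a hds' hAj'
                    rw [hde] at hmem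
                    exact fun hac => absurd hac (not_lt.2 (hbadc a hmem))
                  · omega
          · -- src ≠ sStar, dst ≠ sStar
            have hnotA : ∀ (j : ℕ) (bj : Fin B), j < ds.length → A[j]? = some bj →
                bj ≠ c := by
              intro j bj hj hAj hbc
              have h0 := hcntP j bj hj hAj
              rw [hbc, cnt_cons_of_moved hcM] at h0
              omega
            refine ih (applyMove D (.relocate src dst)) ds hk hE' hend' hamo' ?_ ?_ ?_
              ?_ ?_ ?_ hne H1 (fun j' j a bj d h1 h2 h3 h4' h5 => H2 j' j a bj d h1 h2 h3 h4' h5)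
            · rw [hA3 sStar (Ne.symm hsrcS) (Ne.symm hdstS)]
              exact hDs
            · intro z hz s hsS hzC
              have hmem := hWP z hz s hsS hzC
              by_cases hsx : s = src
              · subst hsx
                rw [hA1]
                have hzc : z ≠ c := fun h => hz (h ▸ hcbad)
                exact mem_dropLast_of_ne hsrc hmem hzc
              · by_cases hsx' : s = dst
                · subst hsx'
                  rw [hA2]
                  exact List.mem_append.2 (Or.inl hmem)
                · rw [hA3 s hsx hsx']
                  exact hmem
            · intro j d bj hds hAj
              have hjlt : j < ds.length := by
                have := (List.getElem?_eq_some_iff.1 hds).1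
                exact this
              have hmem := hI5 j d bj hds hAj
              have hbc : bj ≠ c := hnotA j bj hjlt hAj
              by_cases hsx : d = src
              · subst hsx
                rw [hA1]
                exact mem_dropLast_of_ne hsrc hmem hbc
              · by_cases hsx' : d = dst
                · subst hsx'
                  rw [hA2]
                  exact List.mem_append.2 (Or.inl hmem)
                · rw [hA3 d hsx hsx']
                  exact hmem
            · intro b
              by_cases hbc : b = c
              · subst hbc; rw [hcnt'c]; omega
              · rw [hcntEq b hbc]; exact hcnt1 b
            · intro b hb
              have hbc : b ≠ c := fun h => hb (h ▸ hcbad)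
              rw [hcntEq b hbc]
              exact hcntWP b hb
            · intro j bj hj hAj
              have hbc : bj ≠ c := hnotA j bj hj hAj
              rw [hcntEq bj hbc]
              exact hcntP j bj hj hAj

end LBN

/-- validity of LB-N: if `C` satisfies the condition of Property 4,
then `f(Fin B) ≥ |𝔅¹| + 1`, where `𝔅¹` is the set of badly placed blocks of `C`. -/
theorem brp_LBN {B S : ℕ} (hS : 2 ≤ S) (hB : 1 ≤ B)
    (C : Config B S) (hC : IsConfig C)
    (sStar : Fin S) (i : ℕ) (t : Fin B)
    (ht : ∀ b, t ≤ b) (hloc : (C sStar)[i]? = some t)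
    (h4 : P4Cond C sStar i) :
    {b | BadlyPlaced C b}.ncard + 1 ≤ fRel C Set.univ := by
  classical
  set 𝔉 : Finset (Fin B) := Finset.univ.filter (fun b => BadlyPlaced C b) with hF
  have hncard : {b | BadlyPlaced C b}.ncard = 𝔉.card := by
    rw [← Set.ncard_coe_finset]
    congr 1
    ext b
    simp [hF]
  rw [hncard]
  -- the infimum set is nonempty
  have hnonempty : { n | ∃ ms, Feasible C ms ∧ countMoves (RelocIn Set.univ) C ms = n }.Nonempty := by
    obtain ⟨ms, hms⟩ := LBN.exists_feasible hS (∑ s : Fin S, (C s).length) C rfl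
    exact ⟨countMoves (RelocIn Set.univ) C ms, ms, hms, rfl⟩
  refine le_csInf hnonempty ?_
  rintro nn ⟨ms, hfeas, rfl⟩
  by_contra hlt
  push_neg at hlt
  have hNle : countMoves (RelocIn Set.univ) C ms ≤ 𝔉.card := by omega
  rw [LBN.countMoves_relocIn_eq_sum] at hNle
  -- every badly placed block is relocated at least once
  have hbge : ∀ b ∈ 𝔉, 1 ≤ LBN.cnt b C ms := by
    intro b hb
    rw [hF, Finset.mem_filter] at hb
    by_contra h0
    push_neg at h0
    exact LBN.badly_needs_reloc hfeas.1 hfeas.2 hb.2 (by omega)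
  have hsplit : (∑ b ∈ 𝔉, LBN.cnt b C ms) + ∑ b ∈ Finset.univ.filter (fun b => ¬ BadlyPlaced C b), LBN.cnt b C ms
      = ∑ b : Fin B, LBN.cnt b C ms := by
    rw [hF]
    exact Finset.sum_filter_add_sum_filter_not _ _ _
  have hcard_le : 𝔉.card ≤ ∑ b ∈ 𝔉, LBN.cnt b C ms := by
    calc 𝔉.card = ∑ _b ∈ 𝔉, 1 := by rw [Finset.sum_const, Nat.smul_one_eq_cast]; simp
    _ ≤ ∑ b ∈ 𝔉, LBN.cnt b C ms := Finset.sum_le_sum hbge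
  have hsum_eq : (∑ b ∈ 𝔉, LBN.cnt b C ms) = 𝔉.card := by omega
  have hrest0 : ∀ b, ¬ BadlyPlaced C b → LBN.cnt b C ms = 0 := by
    intro b hb
    have hzero : (∑ b ∈ Finset.univ.filter (fun b => ¬ BadlyPlaced C b), LBN.cnt b C ms) = 0 := by
      omega
    exact (Finset.sum_eq_zero_iff.1 hzero) b (Finset.mem_filter.2 ⟨Finset.mem_univ b, hb⟩)
  have hone : ∀ b ∈ 𝔉, LBN.cnt b C ms = 1 := by
    have := (Finset.sum_eq_sum_iff_of_le hbge).1 (by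
      rw [hsum_eq]
      rw [Finset.sum_const, Nat.smul_one_eq_cast]
      simp)
    intro b hb
    exact (this b hb).symm
  have hcnt1 : ∀ b, LBN.cnt b C ms ≤ 1 := by
    intro b
    by_cases hb : BadlyPlaced C b
    · rw [hone b (by rw [hF, Finset.mem_filter]; exact ⟨Finset.mem_univ b, hb⟩)]
    · rw [hrest0 b hb]
      omega
  exact LBN.big C hC sStar i t ht hloc h4 ms C []
    (Nat.zero_le _)
    hfeas.1 hfeas.2
    (fun b => le_of_eq (hC b))
    (by simp)
    (fun z _ s _ hz => hz)
    (fun j d bj h _ => by simp at h)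
    hcnt1
    hrest0
    (fun j bj hj _ => by simp at hj)
    (fun d hd => by simp at hd)
    (fun j d bj h _ => by simp at h)
    (fun j' j a bj d _ h _ _ _ => by simp at h)
end
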